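/- arXiv:1604.02317 — 6 statements merged into one kernel-verified Lean document; each statement's English description precedes it below -/
import Mathlib

section
/- Let w>0, let L be a linkage in a digraph G, and let Q_1,…,Q_c each be a subpath of some member of L. Let X_1,Y_1,X_2,Y_2,…,X_c,Y_c be pairwise disjoint subsets of V(L) such that the (X_i,Y_i)-wiggle number of Q_i is at least cw for 1≤i≤c. Then for 1≤i≤c there is a subpath R_i of Q_i such that the (X_i,Y_i)-wiggle number of R_i is at least w, and the paths R_1,…,R_c are pairwise vertex-disjoint. -/
open scoped Classical

noncomputable section

/-- A digraph: loopless, no parallel edges (an adjacency relation);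
for distinct `u v` both `adj u v` and `adj v u` may hold. -/
structure Dgraph (V : Type) where
  adj : V → V → Prop
  irrefl : ∀ v, ¬ adj v v

/-- A directed path in a digraph `G`, given by its (nonempty, duplicate-free) list of
vertices, consecutive vertices being adjacent. -/
structure Dpath {V : Type} (G : Dgraph V) where
  verts : List V
  ne : verts ≠ []
  nodup : verts.Nodup
  chain : verts.Chain' G.adj

namespace Dpath

variable {V : Type} {G : Dgraph V}

/-- `s(P)`, the first vertex of a path. -/
def first (P : Dpath G) : V := P.verts.head P.ne

/-- `t(P)`, the last vertex of a path. -/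
def last (P : Dpath G) : V := P.verts.getLast P.ne

/-- `V(P)`, the set of vertices of a path. -/
def support (P : Dpath G) : Set V := {v | v ∈ P.verts}

/-- The length of a path: its number of edges. -/
def length (P : Dpath G) : ℕ := P.verts.length - 1

/-- `Q` is a subpath of `P`. -/
def IsSubpath (Q P : Dpath G) : Prop := Q.verts <:+: P.verts

/-- `Q` is an initial subpath of `P` (a subpath with `s(Q) = s(P)`). -/
def IsInitialSubpath (Q P : Dpath G) : Prop := Q.verts <+: P.verts

/-- The (directed) edges of a path, as ordered pairs of consecutive vertices. -/
def edges (P : Dpath G) : List (V × V) := P.verts.zip P.verts.tail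

end Dpath

variable {V : Type}

/-- A family of paths is a linkage when its members are pairwise vertex-disjoint. -/
def IsLinkage {G : Dgraph V} {k : ℕ} (L : Fin k → Dpath G) : Prop :=
  ∀ i j, i ≠ j → Disjoint (L i).support (L j).support

/-- `V(L)`, the union of the vertex sets of the members of a linkage. -/
def linkSupport {G : Dgraph V} {k : ℕ} (L : Fin k → Dpath G) : Set V :=
  ⋃ i, (L i).support

/-- `(G, s 1, t 1, …, s k, t k)` is a problem instance: the `2k` vertices are distinct. -/
def IsInstance {k : ℕ} (sv tv : Fin k → V) : Prop :=
  Function.Injective sv ∧ Function.Injective tv ∧ ∀ i j, sv i ≠ tv j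

/-- `L` is a linkage for the problem instance: its `i`-th member runs from `s i` to `t i`. -/
def IsLinkageFor {G : Dgraph V} {k : ℕ} (L : Fin k → Dpath G) (sv tv : Fin k → V) : Prop :=
  IsLinkage L ∧ ∀ i, (L i).first = sv i ∧ (L i).last = tv i

/-- A linkage is minimum if no linkage joining the same pairs of ends uses fewer vertices. -/
def IsMinimumLinkage {G : Dgraph V} {k : ℕ} (L : Fin k → Dpath G) : Prop :=
  IsLinkage L ∧ ∀ L' : Fin k → Dpath G, IsLinkage L' →
    (∀ i, (L' i).first = (L i).first ∧ (L' i).last = (L i).last) →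
    (linkSupport L).ncard ≤ (linkSupport L').ncard

/-- A minimum linkage for a problem instance. -/
def IsMinimumLinkageFor {G : Dgraph V} {k : ℕ} (L : Fin k → Dpath G)
    (sv tv : Fin k → V) : Prop :=
  IsLinkageFor L sv tv ∧ IsMinimumLinkage L

/-- `C ⊆ V(G)` is a clique if `G[C]` is semicomplete. -/
def Dgraph.IsClique (G : Dgraph V) (C : Set V) : Prop :=
  ∀ u ∈ C, ∀ v ∈ C, u ≠ v → (G.adj u v ∨ G.adj v u)

/-- `(C 1, …, C c)` is a clique-partition of `G`: a partition of `V(G)` into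
(possibly empty) cliques. -/
def Dgraph.IsCliquePartition (G : Dgraph V) {c : ℕ} (C : Fin c → Set V) : Prop :=
  (∀ a, G.IsClique (C a)) ∧ ∀ v : V, ∃! a, v ∈ C a

/-- The internal vertices of a linkage: vertices of `V(L)` not an end of any member. -/
def internalVerts {G : Dgraph V} {k : ℕ} (L : Fin k → Dpath G) : Set V :=
  linkSupport L \ ((Set.range fun i => (L i).first) ∪ (Set.range fun i => (L i).last))

/-- `M` is internally disjoint from `L`: no internal vertex of `M` belongs to `V(L)`. -/
def InternallyDisjointFrom {G : Dgraph V} {m k : ℕ} (M : Fin m → Dpath G)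
    (L : Fin k → Dpath G) : Prop :=
  ∀ v ∈ internalVerts M, v ∉ linkSupport L

/-- A planar `(Q,R)`-matching of cardinality `n`: a linkage of `n` paths, each with at most
three vertices, whose first vertices lie on `Q` in order and last vertices lie on `R` in
order. -/
def IsPlanarMatching {G : Dgraph V} {n : ℕ} (Q R : Dpath G) (M : Fin n → Dpath G) : Prop :=
  IsLinkage M ∧ (∀ j, (M j).verts.length ≤ 3) ∧
  (List.ofFn fun j => (M j).first).Sublist Q.verts ∧
  (List.ofFn fun j => (M j).last).Sublist R.verts

/-- A planar `(Q,R)`-matching from `X` to `Y`. -/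
def IsPlanarMatchingFromTo {G : Dgraph V} {n : ℕ} (Q R : Dpath G) (M : Fin n → Dpath G)
    (X Y : Set V) : Prop :=
  IsPlanarMatching Q R M ∧ ∀ j, (M j).first ∈ X ∧ (M j).last ∈ Y

/-- `B ⊆ C` is `C`-acceptable for the linkage `L` (for the instance given by `sv, tv`). -/
def CAcceptable {G : Dgraph V} {k : ℕ} (sv tv : Fin k → V) (L : Fin k → Dpath G)
    (C B : Set V) : Prop :=
  B ⊆ C ∧
  Set.range sv ∩ C ⊆ B ∧
  Set.range tv ∩ B = ∅ ∧
  (∀ i, ∃ Q : Dpath G, Q.IsInitialSubpath (L i) ∧ Q.support ∩ C = (L i).support ∩ B) ∧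
  ∀ i j : Fin k, ¬ ∃ M : Fin (k ^ 2 + k + 2) → Dpath G,
      IsPlanarMatchingFromTo (L i) (L j) M B (C \ B) ∧ InternallyDisjointFrom M L

/-- A list of vertices is `(X,Y)`-alternating: entries with even position (0-based) are
in `X`, those with odd position in `Y`. -/
def Alternating (X Y : Set V) (l : List V) : Prop :=
  ∀ (i : ℕ) (h : i < l.length),
    if i % 2 = 0 then l.get ⟨i, h⟩ ∈ X else l.get ⟨i, h⟩ ∈ Y

/-- `P` contains an `(X,Y)`-alternating sequence (of distinct vertices, in order in `P`)
of length `2 * m`. -/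
def HasAlt {G : Dgraph V} (P : Dpath G) (X Y : Set V) (m : ℕ) : Prop :=
  ∃ l : List V, l.Sublist P.verts ∧ l.length = 2 * m ∧ Alternating X Y l

/-- The `(X,Y)`-wiggle number of `P`: half the length of the longest `(X,Y)`-alternating
sequence of vertices in order in `P`. -/
def wiggle {G : Dgraph V} (P : Dpath G) (X Y : Set V) : ℕ :=
  sSup {m | HasAlt P X Y m}

/-- `zOf k c = c(c(k²+k+1)+k+2)`. -/
def zOf (k c : ℕ) : ℕ := c * (c * (k ^ 2 + k + 1) + k + 2)

/-- `wOf k c = c(c−1)(z+1)+1`. -/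
def wOf (k c : ℕ) : ℕ := c * (c - 1) * (zOf k c + 1) + 1

/-- `rOf k c = ckw`. -/
def rOf (k c : ℕ) : ℕ := c * k * wOf k c

/-- `sOf k = k²+k+3`. -/
def sOf (k : ℕ) : ℕ := k ^ 2 + k + 3

/-- `tOf k c = 2cskw + c(2w+1)k²(k²+k+1)`. -/
def tOf (k c : ℕ) : ℕ :=
  2 * c * sOf k * k * wOf k c + c * (2 * wOf k c + 1) * k ^ 2 * (k ^ 2 + k + 1)

/-- Given a clique-partition `C` and a linkage `L` for the instance, `B` is acceptable
(with `A = V(G) ∖ B`). -/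
def Acceptable {G : Dgraph V} {k c : ℕ} (sv tv : Fin k → V) (L : Fin k → Dpath G)
    (C : Fin c → Set V) (z : ℕ) (B : Set V) : Prop :=
  (∀ i, sv i ∈ B) ∧ (∀ i, tv i ∉ B) ∧
  (∀ a, CAcceptable sv tv L (C a) (B ∩ C a)) ∧
  ∀ a b, a ≠ b → ∀ i, wiggle (L i) (B ∩ C b) (Bᶜ ∩ C a) ≤ z

/-- The vertices of `l` belonging to `C`, in order. -/
def inOrderIn (l : List V) (C : Set V) : List V := l.filter fun v => decide (v ∈ C)

/-- The last `m` (or "up to `m`") vertices of the path `P` in `C`, in order along `P`. -/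
def lastIn {G : Dgraph V} (P : Dpath G) (C : Set V) (m : ℕ) : List V :=
  (inOrderIn P.verts C).drop ((inOrderIn P.verts C).length - m)

/-- The first up-to-`m` vertices of the path `P` in `C`, in order along `P`. -/
def firstUpTo {G : Dgraph V} (P : Dpath G) (C : Set V) (m : ℕ) : List V :=
  (inOrderIn P.verts C).take m

/-- The set of terms of a vertex sequence. -/
def seqSet (X : List V) : Set V := {v | v ∈ X}

/-- `𝒜⁺` for a set `𝒜` of vertex sequences. -/
def plusSet (G : Dgraph V) {c : ℕ} (C : Fin c → Set V) (s : ℕ) (𝒜 : Set (List V)) : Set V :=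
  {v | ∃ X ∈ 𝒜, ∃ a, insert v (seqSet X) ⊆ C a ∧
    (v ∈ X ∨ (v ∉ X ∧ X.length = s ∧ ∀ u ∈ X.drop (X.length - (s - 1)), G.adj u v))}

/-- `𝒜⁻` for a set `𝒜` of vertex sequences. -/
def minusSet (G : Dgraph V) {c : ℕ} (C : Fin c → Set V) (s : ℕ) (𝒜 : Set (List V)) : Set V :=
  {v | ∃ X ∈ 𝒜, ∃ a, insert v (seqSet X) ⊆ C a ∧
    (v ∈ X ∨ (v ∉ X ∧ X.length = s ∧ ∀ u ∈ X.take (s - 1), G.adj v u))}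

/-- A set `D ⊆ V(G)` is `(r,s,t)`-restricted. -/
def Restricted (G : Dgraph V) {c : ℕ} (C : Fin c → Set V) (r s t : ℕ) (D : Set V) : Prop :=
  ∃ 𝒜 ℬ : Set (List V),
    (∀ X ∈ 𝒜, X.length ≤ s) ∧ (∀ X ∈ ℬ, X.length ≤ s) ∧
    𝒜.ncard ≤ r ∧ ℬ.ncard ≤ r ∧
    (plusSet G C s ℬ ∩ minusSet G C s 𝒜).ncard ≤ t ∧
    plusSet G C s ℬ \ minusSet G C s 𝒜 ⊆ D ∧
    D ⊆ plusSet G C s ℬ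

/-- `e` is an enumeration of `V(L) ∖ {s 1,…,s k,t 1,…,t k}`. -/
def IsEnumeration {G : Dgraph V} {k : ℕ} (L : Fin k → Dpath G) (sv tv : Fin k → V)
    (e : List V) : Prop :=
  e.Nodup ∧ {v | v ∈ e} = linkSupport L \ (Set.range sv ∪ Set.range tv)

/-- `B h = {s 1,…,s k} ∪ {v 1,…,v h}`, for the enumeration `e`. -/
def BsetOf {k : ℕ} (sv : Fin k → V) (e : List V) (h : ℕ) : Set V :=
  Set.range sv ∪ {v | v ∈ e.take h}

/-- `A h = V(L) ∖ B h`. -/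
def AsetOf {G : Dgraph V} {k : ℕ} (L : Fin k → Dpath G) (sv : Fin k → V) (e : List V)
    (h : ℕ) : Set V :=
  linkSupport L \ BsetOf sv e h

/-- The maximal subpaths of members of `L` with all vertices in `S`: the components,
included in `S`, of the digraph obtained from `P 1 ∪ ⋯ ∪ P k` by deleting the edges with
exactly one end in `S`. -/
def segsIn {G : Dgraph V} {k : ℕ} (L : Fin k → Dpath G) (S : Set V) : Set (Dpath G) :=
  {Q | ∃ i, Q.IsSubpath (L i) ∧ Q.support ⊆ S ∧
    ∀ Q' : Dpath G, Q'.IsSubpath (L i) → Q'.support ⊆ S → Q.IsSubpath Q' →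
      Q'.verts = Q.verts}

/-- `𝒜 h`: first up-to-`s` vertices in each `C a` of each path of `ℛ h`. -/
def AseqsOf (G : Dgraph V) {k c : ℕ} (C : Fin c → Set V) (s : ℕ) (L : Fin k → Dpath G)
    (sv : Fin k → V) (e : List V) (h : ℕ) : Set (List V) :=
  {X | ∃ R ∈ segsIn L (AsetOf L sv e h), ∃ a, X = firstUpTo R (C a) s}

/-- `ℬ h`: last up-to-`s` vertices in each `C a` of each path of `𝒬 h`. -/
def BseqsOf (G : Dgraph V) {k c : ℕ} (C : Fin c → Set V) (s : ℕ) (L : Fin k → Dpath G)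
    (sv : Fin k → V) (e : List V) (h : ℕ) : Set (List V) :=
  {X | ∃ Q ∈ segsIn L (BsetOf sv e h), ∃ a, X = lastIn Q (C a) s}

/-- `D h = (ℬ h⁺ ∖ 𝒜 h⁻) ∪ B h`. -/
def DsetOf (G : Dgraph V) {k c : ℕ} (C : Fin c → Set V) (s : ℕ) (L : Fin k → Dpath G)
    (sv : Fin k → V) (e : List V) (h : ℕ) : Set V :=
  (plusSet G C s (BseqsOf G C s L sv e h) \ minusSet G C s (AseqsOf G C s L sv e h))
    ∪ BsetOf sv e h

/-- The edges of the members of a linkage. -/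
def linkEdges {G : Dgraph V} {k : ℕ} (L : Fin k → Dpath G) : Set (V × V) :=
  ⋃ i, {p | p ∈ (L i).edges}

/-- `J h`: the edges of `P 1 ∪ ⋯ ∪ P k` with one end in `A h` and the other in `B h`. -/
def JsetOf {G : Dgraph V} {k : ℕ} (L : Fin k → Dpath G) (sv : Fin k → V) (e : List V)
    (h : ℕ) : Set (V × V) :=
  {p ∈ linkEdges L |
    (p.1 ∈ AsetOf L sv e h ∧ p.2 ∈ BsetOf sv e h) ∨
    (p.1 ∈ BsetOf sv e h ∧ p.2 ∈ AsetOf L sv e h)}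

/-- `Y h = {(e,i) : e ∈ J h ∩ E(P i)}`, as a set of coloured edges. -/
def YsetOf {G : Dgraph V} {k : ℕ} (L : Fin k → Dpath G) (sv : Fin k → V) (e : List V)
    (h : ℕ) : Set ((V × V) × Fin k) :=
  {p | p.1 ∈ JsetOf L sv e h ∧ p.1 ∈ (L p.2).edges}

/-- `ℰ`: the admissible sets of coloured edges (a coloured edge is a pair `(e,i)` with
`e ∈ E(G)` and `i` a colour in `Fin k`; its tail is `e.1` and its head is `e.2`). -/
def EdgeSets (G : Dgraph V) {k : ℕ} (sv tv : Fin k → V) (w : ℕ) :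
    Set (Set ((V × V) × Fin k)) :=
  {Y | (∀ p ∈ Y, G.adj p.1.1 p.1.2) ∧
    Y.ncard ≤ 2 * w - 1 ∧
    (∀ p ∈ Y, ∀ q ∈ Y, p ≠ q → p.1.2 ≠ q.1.2 ∧ p.1.1 ≠ q.1.1) ∧
    (∀ p ∈ Y, ∀ q ∈ Y, ({p.1.1, p.1.2} ∩ {q.1.1, q.1.2} : Set V).Nonempty → p.2 = q.2) ∧
    (∀ p ∈ Y, p.1.2 ∉ Set.range sv ∧ p.1.1 ∉ Set.range tv) ∧
    (∀ p ∈ Y, ∀ i, (p.1.1 = sv i → p.2 = i) ∧ (p.1.2 = tv i → p.2 = i))}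

/-- The vertices of the auxiliary digraph `H`: pairs `(Y,D)` with `Y ∈ ℰ`, `D ∈ 𝒟`
(i.e. `D` is `(r,s,t)`-restricted), such that every coloured edge of `Y` has exactly one
end in `D`. -/
def HVert (G : Dgraph V) {k c : ℕ} (sv tv : Fin k → V) (C : Fin c → Set V)
    (w r s t : ℕ) (x : Set ((V × V) × Fin k) × Set V) : Prop :=
  x.1 ∈ EdgeSets G sv tv w ∧ Restricted G C r s t x.2 ∧
  ∀ p ∈ x.1, Xor' (p.1.1 ∈ x.2) (p.1.2 ∈ x.2)

/-- Adjacency in the auxiliary digraph `H`. -/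
def HAdj (G : Dgraph V) {k c : ℕ} (sv tv : Fin k → V) (C : Fin c → Set V)
    (w r s t : ℕ) (x y : Set ((V × V) × Fin k) × Set V) : Prop :=
  x ≠ y ∧ HVert G sv tv C w r s t x ∧ HVert G sv tv C w r s t y ∧ x.2 ⊆ y.2 ∧
  ∃ p q : (V × V) × Fin k, p ≠ q ∧ symmDiff x.1 y.1 = {p, q} ∧
    p.1.2 = q.1.1 ∧ p.1.1 ≠ q.1.2 ∧ p.1.2 ∈ y.2 \ x.2

/-- The auxiliary digraph `H`. -/
def auxH (G : Dgraph V) {k c : ℕ} (sv tv : Fin k → V) (C : Fin c → Set V)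
    (w r s t : ℕ) : Dgraph (Set ((V × V) × Fin k) × Set V) :=
  ⟨HAdj G sv tv C w r s t, fun _ hx => hx.1 rfl⟩

/-- `S 0`: the vertices `(Y,D)` of `H` with `|Y| = k` and every member of `Y` having tail
in `{s 1,…,s k}`. -/
def S0set (G : Dgraph V) {k c : ℕ} (sv tv : Fin k → V) (C : Fin c → Set V)
    (w r s t : ℕ) : Set (Set ((V × V) × Fin k) × Set V) :=
  {x | HVert G sv tv C w r s t x ∧ x.1.ncard = k ∧ ∀ p ∈ x.1, p.1.1 ∈ Set.range sv}

/-- `T 0`: the vertices `(Y,D)` of `H` with `|Y| = k` and every member of `Y` having head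
in `{t 1,…,t k}`. -/
def T0set (G : Dgraph V) {k c : ℕ} (sv tv : Fin k → V) (C : Fin c → Set V)
    (w r s t : ℕ) : Set (Set ((V × V) × Fin k) × Set V) :=
  {x | HVert G sv tv C w r s t x ∧ x.1.ncard = k ∧ ∀ p ∈ x.1, p.1.2 ∈ Set.range tv}

end

-- auxiliary lemmas for disjoint_wiggle_segments

lemma DWS_select_intervals {ι K : Type} [DecidableEq ι] (col : ι → K) (a b : ι → ℕ → ℕ) :
    ∀ (n : ℕ) (S : Finset ι) (H : ι → Finset ℕ),
      S.card ≤ n →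
      (∀ i ∈ S, ∀ h ∈ H i, a i h < b i h) →
      (∀ i ∈ S, ∀ h ∈ H i, ∀ h' ∈ H i, h < h' → b i h ≤ a i h') →
      (∀ i ∈ S, S.card ≤ (H i).card) →
      ∃ f : ι → ℕ, (∀ i ∈ S, f i ∈ H i) ∧
        ∀ i ∈ S, ∀ i' ∈ S, i ≠ i' → col i = col i' →
          b i (f i) ≤ a i' (f i') ∨ b i' (f i') ≤ a i (f i) := by
  intro n
  induction n with
  | zero =>
    intro S H hcard _ _ _
    have : S = ∅ := Finset.card_eq_zero.mp (Nat.le_zero.mp hcard)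
    subst this
    exact ⟨fun _ => 0, by simp, by simp⟩
  | succ n ih =>
    intro S H hcard hab hmono hH
    obtain rfl | hSne := S.eq_empty_or_nonempty
    · exact ⟨fun _ => 0, by simp, by simp⟩
    set T : Finset (ι × ℕ) := S.biUnion (fun i => (H i).image (fun h => (i, h))) with hT
    have hTne : T.Nonempty := by
      obtain ⟨i, hi⟩ := id hSne
      have : 0 < (H i).card := lt_of_lt_of_le (Finset.card_pos.mpr hSne) (hH i hi)
      obtain ⟨h, hh⟩ := Finset.card_pos.mp this
      exact ⟨(i, h), Finset.mem_biUnion.mpr ⟨i, hi, Finset.mem_image.mpr ⟨h, hh, rfl⟩⟩⟩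
    obtain ⟨p₀, hp₀T, hp₀min⟩ := T.exists_min_image (fun p => b p.1 p.2) hTne
    obtain ⟨i₀, hi₀, h₀, hh₀, rfl⟩ : ∃ i ∈ S, ∃ h ∈ H i, (i, h) = p₀ := by
      rcases Finset.mem_biUnion.mp hp₀T with ⟨i, hi, hmem⟩
      rcases Finset.mem_image.mp hmem with ⟨h, hh, heq⟩
      exact ⟨i, hi, h, hh, heq⟩
    set S' := S.erase i₀ with hS'
    set Hf : ι → Finset ℕ := fun i =>
      if col i = col i₀ then (H i).filter (fun h => b i₀ h₀ ≤ a i h ∨ b i h ≤ a i₀ h₀)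
      else H i with hHf
    have hHfsub : ∀ i, Hf i ⊆ H i := by
      intro i
      simp only [hHf]
      split
      · exact Finset.filter_subset _ _
      · exact Finset.Subset.refl _
    have hcard' : ∀ i ∈ S', S'.card ≤ (Hf i).card := by
      intro i hi
      have hiS : i ∈ S := Finset.mem_of_mem_erase hi
      have hS'card : S'.card = S.card - 1 := Finset.card_erase_of_mem hi₀
      have key : (H i).card ≤ (Hf i).card + 1 := by
        by_cases hc : col i = col i₀
        · have hsplit := Finset.card_filter_add_card_filter_not
            (s := H i) (p := fun h => b i₀ h₀ ≤ a i h ∨ b i h ≤ a i₀ h₀)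
          have hbad : ((H i).filter (fun h => ¬ (b i₀ h₀ ≤ a i h ∨ b i h ≤ a i₀ h₀))).card ≤ 1 := by
            apply Finset.card_le_one.mpr
            intro h1 hh1 h2 hh2
            by_contra hne
            rcases Finset.mem_filter.mp hh1 with ⟨hh1H, hc1⟩
            rcases Finset.mem_filter.mp hh2 with ⟨hh2H, hc2⟩
            push_neg at hc1 hc2
            have key2 : ∀ x y : ℕ, x ∈ H i → y ∈ H i →
                a i y < b i₀ h₀ → a i₀ h₀ < b i x → x < y → False := by
              intro x y hx hy hay hbx hxy
              have hmin : b i₀ h₀ ≤ b i x := by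
                have : (i, x) ∈ T := Finset.mem_biUnion.mpr
                  ⟨i, hiS, Finset.mem_image.mpr ⟨x, hx, rfl⟩⟩
                exact hp₀min (i, x) this
              have := hmono i hiS x hx y hy hxy
              omega
            rcases lt_or_gt_of_ne hne with hlt | hgt
            · exact key2 h1 h2 hh1H hh2H hc2.1 hc1.2 hlt
            · exact key2 h2 h1 hh2H hh1H hc1.1 hc2.2 hgt
          simp only [hHf, if_pos hc]
          omega
        · simp [hHf, if_neg hc]
      have := hH i hiS
      omega
    obtain ⟨f', hf'mem, hf'disj⟩ := ih S' Hf
      (by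
        have h1 : S'.card = S.card - 1 := by rw [hS']; exact Finset.card_erase_of_mem hi₀
        have h2 := Finset.card_pos.mpr hSne
        omega)
      (fun i hi h hh => hab i (Finset.mem_of_mem_erase hi) h (hHfsub i hh))
      (fun i hi h hh h' hh' => hmono i (Finset.mem_of_mem_erase hi) h (hHfsub i hh) h' (hHfsub i hh'))
      hcard'
    refine ⟨Function.update f' i₀ h₀, ?_, ?_⟩
    · intro i hi
      by_cases hii : i = i₀
      · subst hii; simpa using hh₀
      · rw [Function.update_of_ne hii]
        exact hHfsub i (hf'mem i (Finset.mem_erase.mpr ⟨hii, hi⟩))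
    · intro i hi i' hi' hne hcol
      by_cases hii : i = i₀
      · subst hii
        have hi'S' : i' ∈ S' := Finset.mem_erase.mpr ⟨Ne.symm hne, hi'⟩
        have := hf'mem i' hi'S'
        rw [Function.update_self, Function.update_of_ne (Ne.symm hne)]
        simp only [hHf, if_pos hcol.symm] at this
        exact (Finset.mem_filter.mp this).2
      · by_cases hii' : i' = i₀
        · subst hii'
          have hiS' : i ∈ S' := Finset.mem_erase.mpr ⟨hii, hi⟩
          have := hf'mem i hiS'
          rw [Function.update_of_ne hii, Function.update_self]
          simp only [hHf, if_pos hcol] at this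
          exact (Finset.mem_filter.mp this).2.symm
        · rw [Function.update_of_ne hii, Function.update_of_ne hii']
          exact hf'disj i (Finset.mem_erase.mpr ⟨hii, hi⟩) i' (Finset.mem_erase.mpr ⟨hii', hi'⟩) hne hcol

namespace DWS

variable {V : Type}

lemma alt_take {X Y : Set V} {l : List V} (h : Alternating X Y l) (n : ℕ) :
    Alternating X Y (l.take n) := by
  intro i hi
  have hi' : i < l.length := by
    simp only [List.length_take, lt_min_iff] at hi; exact hi.2
  have := h i hi'
  simpa [List.get_eq_getElem, List.getElem_take] using this

lemma alt_drop {X Y : Set V} {l : List V} (h : Alternating X Y l) (w : ℕ) :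
    Alternating X Y (l.drop (2 * w)) := by
  intro i hi
  have hi' : 2 * w + i < l.length := by
    simp only [List.length_drop] at hi; omega
  have := h (2 * w + i) hi'
  have hpar : (2 * w + i) % 2 = i % 2 := by omega
  simp only [List.get_eq_getElem, List.getElem_drop]
  simpa [List.get_eq_getElem, hpar] using this

lemma exists_chunks {X Y : Set V} (w : ℕ) (hw : 0 < w) :
    ∀ (n : ℕ) (l m : List V), l.Sublist m → Alternating X Y l → l.length = 2 * w * n →
    ∃ cs : List (List V), cs.length = n ∧ (∀ ch ∈ cs, ch ≠ []) ∧
      cs.flatten <+: m ∧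
      ∀ ch ∈ cs, ∃ b : List V, b.Sublist ch ∧ b.length = 2 * w ∧ Alternating X Y b := by
  intro n
  induction n with
  | zero =>
    intro l m _ _ _
    exact ⟨[], rfl, by simp, by simp, by simp⟩
  | succ n ih =>
    intro l m hsub halt hlen
    have hsplit : l.take (2 * w) ++ l.drop (2 * w) = l := List.take_append_drop _ _
    have hsub' : (l.take (2 * w) ++ l.drop (2 * w)).Sublist m := by rw [hsplit]; exact hsub
    obtain ⟨m₁, m₂, rfl, hsub1, hsub2⟩ := List.append_sublist_iff.mp hsub'
    have hge : 2 * w ≤ l.length := by rw [hlen, Nat.mul_succ]; omega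
    have htake : (l.take (2 * w)).length = 2 * w := by
      rw [List.length_take]; omega
    obtain ⟨cs', hlen', hne', hpre', hblk'⟩ := ih (l.drop (2 * w)) m₂ hsub2 (alt_drop halt w)
      (by rw [List.length_drop, hlen, Nat.mul_succ]; omega)
    refine ⟨m₁ :: cs', by simp [hlen'], ?_, ?_, ?_⟩
    · intro ch hch
      rcases List.mem_cons.mp hch with rfl | hch
      · have := hsub1.length_le
        intro hnil
        rw [hnil] at this
        simp [htake] at this
        omega
      · exact hne' ch hch
    · obtain ⟨t, ht⟩ := hpre'
      exact ⟨t, by simp only [List.flatten_cons, List.append_assoc, ht]⟩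
    · intro ch hch
      rcases List.mem_cons.mp hch with rfl | hch
      · exact ⟨l.take (2 * w), hsub1, htake, alt_take halt _⟩
      · exact hblk' ch hch

lemma sigma_mono (cs : List (List V)) {h h' : ℕ} (hle : h ≤ h') :
    ((cs.take h).flatten).length ≤ ((cs.take h').flatten).length := by
  conv_rhs => rw [← List.take_append_drop h (cs.take h')]
  rw [List.flatten_append, List.length_append, List.take_take, min_eq_left hle]
  omega

lemma sigma_succ (cs : List (List V)) (h : ℕ) (hh : h < cs.length) :
    ((cs.take (h + 1)).flatten).length
      = ((cs.take h).flatten).length + (cs.get ⟨h, hh⟩).length := by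
  rw [List.take_succ, List.flatten_append, List.length_append]
  simp [List.getElem?_eq_getElem hh]

lemma posn (cs : List (List V)) (m : List V) (hpre : cs.flatten <+: m)
    (h : ℕ) (hh : h < cs.length) :
    ∃ pre post : List V, m = pre ++ cs.get ⟨h, hh⟩ ++ post ∧
      pre.length = ((cs.take h).flatten).length := by
  have h1 : (cs.take (h + 1)).flatten <+: cs.flatten := by
    conv_rhs => rw [← List.take_append_drop (h + 1) cs]
    rw [List.flatten_append]
    exact List.prefix_append _ _
  have h2 : (cs.take (h + 1)).flatten <+: m := h1.trans hpre
  have h3 : (cs.take (h + 1)).flatten = (cs.take h).flatten ++ cs.get ⟨h, hh⟩ := by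
    rw [List.take_succ, List.flatten_append]
    simp [List.getElem?_eq_getElem hh]
  obtain ⟨post, hpost⟩ := h2
  exact ⟨(cs.take h).flatten, post, by rw [← hpost, h3], rfl⟩

end DWS


/-- Theorem 3.2: disjoint wiggle segments. -/
theorem disjoint_wiggle_segments {V : Type} [Fintype V] {k c : ℕ} (G : Dgraph V)
    (w : ℕ) (hw : 0 < w)
    (L : Fin k → Dpath G) (hL : IsLinkage L)
    (Q : Fin c → Dpath G) (hQ : ∀ i, ∃ j, (Q i).IsSubpath (L j))
    (X Y : Fin c → Set V)
    (hXL : ∀ i, X i ⊆ linkSupport L) (hYL : ∀ i, Y i ⊆ linkSupport L)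
    (hdisj : ∀ i, Disjoint (X i) (Y i))
    (hdisj' : ∀ i j, i ≠ j →
      Disjoint (X i) (X j) ∧ Disjoint (Y i) (Y j) ∧ Disjoint (X i) (Y j))
    (hwig : ∀ i, c * w ≤ wiggle (Q i) (X i) (Y i)) :
    ∃ R : Fin c → Dpath G,
      (∀ i, (R i).IsSubpath (Q i) ∧ w ≤ wiggle (R i) (X i) (Y i)) ∧
      ∀ i j, i ≠ j → Disjoint (R i).support (R j).support := by
  classical
  rcases Nat.eq_zero_or_pos c with rfl | hc
  · exact ⟨Fin.elim0, fun i => i.elim0, fun i => i.elim0⟩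
  have key : ∀ i : Fin c, ∃ (j : Fin k) (pre post : List V) (cs : List (List V)),
      pre ++ (Q i).verts ++ post = (L j).verts ∧
      cs.length = c ∧ (∀ ch ∈ cs, ch ≠ []) ∧ cs.flatten <+: (Q i).verts ∧
      (∀ ch ∈ cs, ∃ b : List V, b.Sublist ch ∧ b.length = 2 * w ∧
        Alternating (X i) (Y i) b) := by
    intro i
    obtain ⟨j, pre, post, hLj⟩ := hQ i
    have hbdd : BddAbove {m | HasAlt (Q i) (X i) (Y i) m} := by
      refine ⟨(Q i).verts.length, fun m hm => ?_⟩
      obtain ⟨l, hsub, hlen, _⟩ := hm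
      have := hsub.length_le
      omega
    have h0 : HasAlt (Q i) (X i) (Y i) 0 :=
      ⟨[], List.nil_sublist _, by simp, fun r hr => by simp at hr⟩
    have hmem : HasAlt (Q i) (X i) (Y i) (wiggle (Q i) (X i) (Y i)) :=
      Nat.sSup_mem ⟨0, by exact h0⟩ hbdd
    obtain ⟨l, hsub, hlen, halt⟩ := hmem
    have hcw : 2 * (c * w) ≤ l.length := by
      have := hwig i
      omega
    have hsub' : (l.take (2 * (c * w))).Sublist (Q i).verts :=
      (List.take_sublist _ _).trans hsub
    have hlen' : (l.take (2 * (c * w))).length = 2 * w * c := by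
      rw [List.length_take, min_eq_left hcw]; ring
    obtain ⟨cs, h1, h2, h3, h4⟩ := DWS.exists_chunks w hw c (l.take (2 * (c * w)))
      (Q i).verts hsub' (DWS.alt_take halt _) hlen'
    exact ⟨j, pre, post, cs, hLj, h1, h2, h3, h4⟩
  choose jf pref postf cs hLj hclen hcne hcpre hcblk using key
  set afun : Fin c → ℕ → ℕ :=
    fun i h => (pref i).length + (((cs i).take h).flatten).length with hafun
  set bfun : Fin c → ℕ → ℕ :=
    fun i h => (pref i).length + (((cs i).take (h + 1)).flatten).length with hbfun
  obtain ⟨f, hfmem, hfdisj⟩ := DWS_select_intervals (ι := Fin c) (K := Fin k) jf afun bfun c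
    Finset.univ (fun _ => Finset.range c)
    (by simp)
    (by
      intro i _ h hh
      have hh' : h < (cs i).length := by rw [hclen i]; exact Finset.mem_range.mp hh
      have hss := DWS.sigma_succ (cs i) h hh'
      have hnz : ((cs i).get ⟨h, hh'⟩).length ≠ 0 := by
        simpa [List.length_eq_zero_iff] using hcne i _ (List.get_mem _ ⟨h, hh'⟩)
      simp only [hafun, hbfun]
      omega)
    (by
      intro i _ h _ h' _ hlt
      simp only [hafun, hbfun]
      have := DWS.sigma_mono (cs i) (h := h + 1) (h' := h') (by omega)
      omega)
    (by intro i _; simp)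
  have hflt : ∀ i : Fin c, f i < (cs i).length := by
    intro i
    rw [hclen i]
    exact Finset.mem_range.mp (hfmem i (Finset.mem_univ i))
  have main : ∀ i : Fin c, ∃ Ri : Dpath G, Ri.IsSubpath (Q i) ∧ w ≤ wiggle Ri (X i) (Y i) ∧
      ∀ v ∈ Ri.support, ∃ nn, afun i (f i) ≤ nn ∧ nn < bfun i (f i) ∧
        (L (jf i)).verts[nn]? = some v := by
    intro i
    obtain ⟨pre', post', heq, hplen⟩ := DWS.posn (cs i) (Q i).verts (hcpre i) (f i) (hflt i)
    set ch := (cs i).get ⟨f i, hflt i⟩ with hch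
    have hinfix : ch <:+: (Q i).verts := ⟨pre', post', heq.symm⟩
    have hsubl : ch.Sublist (Q i).verts := hinfix.sublist
    refine ⟨⟨ch, hcne i ch (List.get_mem _ _), (Q i).nodup.sublist hsubl,
      (Q i).chain.infix hinfix⟩, hinfix, ?_, ?_⟩
    · obtain ⟨b, hbsub, hblen, hbalt⟩ := hcblk i ch (List.get_mem _ _)
      have hmem : HasAlt (G := G) ⟨ch, hcne i ch (List.get_mem _ _),
          (Q i).nodup.sublist hsubl, (Q i).chain.infix hinfix⟩ (X i) (Y i) w :=
        ⟨b, hbsub, by rw [hblen], hbalt⟩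
      refine le_csSup ?_ hmem
      refine ⟨ch.length, fun m hm => ?_⟩
      obtain ⟨l2, hs2, hl2, _⟩ := hm
      have := hs2.length_le
      simp only [Dpath.length] at this ⊢
      omega
    · intro v hv
      simp only [Dpath.support, Set.mem_setOf_eq] at hv
      obtain ⟨r, hr, hrv⟩ := List.getElem_of_mem hv
      refine ⟨(pref i ++ pre').length + r, ?_, ?_, ?_⟩
      · simp only [hafun, List.length_append, hplen]
        omega
      · simp only [hbfun, List.length_append, hplen,
          DWS.sigma_succ (cs i) (f i) (hflt i), ← hch]
        omega
      · have hLeq : (L (jf i)).verts = (pref i ++ pre') ++ (ch ++ (post' ++ postf i)) := by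
          rw [← hLj i, heq]
          simp [List.append_assoc]
        rw [hLeq, List.getElem?_append_right (Nat.le_add_right _ _),
          Nat.add_sub_cancel_left, List.getElem?_append, if_pos hr,
          List.getElem?_eq_getElem hr, hrv]
  choose R hRsub hRwig hRidx using main
  refine ⟨R, fun i => ⟨hRsub i, hRwig i⟩, ?_⟩
  intro i i' hne
  rw [Set.disjoint_left]
  intro v hvi hvi'
  obtain ⟨n1, ha1, hb1, hg1⟩ := hRidx i v hvi
  obtain ⟨n2, ha2, hb2, hg2⟩ := hRidx i' v hvi'
  by_cases hjj : jf i = jf i'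
  · have hdis := hfdisj i (Finset.mem_univ i) i' (Finset.mem_univ i') hne hjj
    rw [hjj] at hg1
    have hn1lt : n1 < (L (jf i')).verts.length := by
      rcases List.getElem?_eq_some_iff.mp hg1 with ⟨hlt, _⟩
      exact hlt
    have := (List.getElem?_inj hn1lt (L (jf i')).nodup).mp (hg1.trans hg2.symm)
    omega
  · have hv1 : v ∈ (L (jf i)).support := by
      simp only [Dpath.support, Set.mem_setOf_eq]
      exact List.mem_of_getElem? hg1
    have hv2 : v ∈ (L (jf i')).support := by
      simp only [Dpath.support, Set.mem_setOf_eq]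
      exact List.mem_of_getElem? hg2
    exact Set.disjoint_left.mp (hL (jf i) (jf i') hjj) hv1 hv2
end

section
/- Let L be a minimum linkage for a problem instance (G,s_1,t_1,…,s_k,t_k), let ℓ≥3, let C be a clique of G, let Q' be a subpath of some member of L, and let Q be a subpath of Q' with |C∩V(Q)|≥ℓ. Let v∈C∖V(L) be adjacent from each of the last ℓ vertices of Q in C. Then v is adjacent from each of the last ℓ vertices of Q' in C. -/
open scoped Classical

section AuxShift

private lemma drop_subset_drop_of_le {α : Type*} {l : List α} {m m' : ℕ} (h : m' ≤ m)
    {u : α} (hu : u ∈ l.drop m) : u ∈ l.drop m' := by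
  have he : l.drop m = (l.drop m').drop (m - m') := by
    rw [List.drop_drop]; congr 1; omega
  rw [he] at hu
  exact List.mem_of_mem_drop hu

private lemma mem_lastdrop_left {α : Type*} {xs ys : List α} {ℓ : ℕ} {u : α}
    (hu : u ∈ (xs ++ ys).drop ((xs ++ ys).length - ℓ)) (hy : u ∉ ys) :
    u ∈ xs.drop (xs.length - ℓ) := by
  rw [List.drop_append] at hu
  rcases List.mem_append.1 hu with h | h
  · exact drop_subset_drop_of_le (by simp; omega) h
  · exact absurd (List.mem_of_mem_drop h) hy

private lemma lastdrop_append_right {α : Type*} {xs f : List α} {ℓ : ℕ} (h : ℓ ≤ f.length) :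
    (xs ++ f).drop ((xs ++ f).length - ℓ) = f.drop (f.length - ℓ) := by
  rw [List.drop_append, List.drop_eq_nil_of_le (by simp; omega),
    List.nil_append]
  congr 1
  simp
  omega

private lemma cons_sublist_decomp {α : Type*} {x : α} {l : List α} :
    ∀ {r : List α}, List.Sublist (x :: l) r → ∃ a b, r = a ++ x :: b ∧ List.Sublist l b := by
  intro r
  induction r with
  | nil => intro h; simp at h
  | cons y r ih =>
    intro h
    cases h with
    | cons _ h' =>
      obtain ⟨a, b, hab, hb⟩ := ih h'
      exact ⟨y :: a, b, by rw [hab]; rfl, hb⟩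
    | cons_cons _ h' => exact ⟨[], r, rfl, h'⟩

private lemma head?_append_left {α : Type*} (l₁ l₂ : List α) (h : l₁ ≠ []) :
    (l₁ ++ l₂).head? = l₁.head? := by
  cases l₁ with
  | nil => exact absurd rfl h
  | cons a t => rfl

private lemma getLast?_append_right' {α : Type*} (l₁ l₂ : List α) (h : l₂ ≠ []) :
    (l₁ ++ l₂).getLast? = l₂.getLast? := by
  rw [List.getLast?_append, List.getLast?_eq_getLast h]
  rfl

end AuxShift

/-- Theorem 4.1 (the shift lemma): if `v ∈ C ∖ V(L)` is adjacent from the last `ℓ`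
vertices of `Q` in `C`, where `Q` is a subpath of `Q'` and `Q'` a subpath of a member of
the minimum linkage `L`, then `v` is adjacent from the last `ℓ` vertices of `Q'` in `C`. -/
theorem shift_lemma {V : Type} [Fintype V] {k : ℕ} (G : Dgraph V)
    (sv tv : Fin k → V) (hinst : IsInstance sv tv)
    (L : Fin k → Dpath G) (hL : IsMinimumLinkageFor L sv tv)
    (ℓ : ℕ) (hℓ : 3 ≤ ℓ)
    (C : Set V) (hC : G.IsClique C)
    (Q' Q : Dpath G) (hQ' : ∃ i, Q'.IsSubpath (L i)) (hQ : Q.IsSubpath Q')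
    (hcard : ℓ ≤ (C ∩ Q.support).ncard)
    (v : V) (hv : v ∈ C \ linkSupport L)
    (hadj : ∀ u ∈ lastIn Q C ℓ, G.adj u v) :
    ∀ u ∈ lastIn Q' C ℓ, G.adj u v := by
  classical
  intro u hu
  obtain ⟨i, hQi'⟩ := hQ'
  obtain ⟨s, t, hst⟩ := hQ
  have hflen : ℓ ≤ (inOrderIn Q.verts C).length := by
    have hnd : (inOrderIn Q.verts C).Nodup := List.filter_sublist.nodup Q.nodup
    have h1 : (C ∩ Q.support) = {x | x ∈ inOrderIn Q.verts C} := by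
      ext x
      simp [inOrderIn, Dpath.support, List.mem_filter, and_comm]
    have h2 : ({x | x ∈ inOrderIn Q.verts C} : Set V) = ↑(inOrderIn Q.verts C).toFinset := by
      ext x; simp
    rw [h1, h2, Set.ncard_coe_finset, List.toFinset_card_of_nodup hnd] at hcard
    exact hcard
  have hfQ' : inOrderIn Q'.verts C
      = (inOrderIn s C ++ inOrderIn Q.verts C) ++ inOrderIn t C := by
    rw [← hst]; simp [inOrderIn, List.filter_append]
  by_cases huft : u ∈ inOrderIn t C
  swap
  · -- u is among the last ℓ vertices of Q in C
    apply hadj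
    simp only [lastIn] at hu ⊢
    rw [hfQ'] at hu
    have h := mem_lastdrop_left hu huft
    rwa [lastdrop_append_right hflen] at h
  · -- u comes after Q; suppose ¬ adj u v, reroute for a contradiction
    by_contra hnadj
    have huC : u ∈ C := by
      have := List.of_mem_filter huft; simpa using this
    have hut : u ∈ t := List.mem_of_mem_filter huft
    obtain ⟨p, q, hpq⟩ := hQi'
    have huQ' : u ∈ Q'.verts := by rw [← hst]; simp [hut]
    have huLi : u ∈ (L i).verts := by rw [← hpq]; simp [huQ']
    have huL : u ∈ linkSupport L := Set.mem_iUnion.2 ⟨i, huLi⟩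
    have hvC : v ∈ C := hv.1
    have hvL : v ∉ linkSupport L := hv.2
    have hvu : G.adj v u := by
      rcases hC u huC v hvC (by rintro rfl; exact hvL huL) with h | h
      · exact absurd h hnadj
      · exact h
    -- decompose the last ℓ vertices of Q in C
    have hXlen : (lastIn Q C ℓ).length = ℓ := by
      simp only [lastIn, List.length_drop]; omega
    obtain ⟨x1, r1, e1⟩ := List.exists_cons_of_ne_nil (l := lastIn Q C ℓ)
      (by intro h; rw [h] at hXlen; simp at hXlen; omega)
    obtain ⟨x2, r2, e2⟩ := List.exists_cons_of_ne_nil (l := r1)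
      (by intro h; rw [e1, h] at hXlen; simp at hXlen; omega)
    obtain ⟨x3, r3, e3⟩ := List.exists_cons_of_ne_nil (l := r2)
      (by intro h; rw [e1, e2, h] at hXlen; simp at hXlen; omega)
    have hXeq : lastIn Q C ℓ = x1 :: x2 :: x3 :: r3 := by rw [e1, e2, e3]
    have hXsub : List.Sublist (lastIn Q C ℓ) Q.verts :=
      (List.drop_sublist _ _).trans List.filter_sublist
    have hXnd : (lastIn Q C ℓ).Nodup := hXsub.nodup Q.nodup
    have hx23 : x2 ≠ x3 := by
      rw [hXeq] at hXnd
      simp [List.nodup_cons] at hXnd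
      exact hXnd.2.1.1
    have hadjx1 : G.adj x1 v := hadj x1 (by rw [hXeq]; simp)
    -- decompose Q.verts around x1
    obtain ⟨a, b, hQab, hb⟩ := cons_sublist_decomp (hXeq ▸ hXsub)
    have hx2b : x2 ∈ b := hb.subset (by simp)
    have hx3b : x3 ∈ b := hb.subset (by simp)
    -- decompose t around u
    obtain ⟨c, d, hcd⟩ := List.append_of_mem hut
    set P1 : List V := p ++ s ++ a ++ [x1] with hP1
    set mid : List V := b ++ c with hmid
    set P3 : List V := u :: (d ++ q) with hP3
    have hLi : (L i).verts = P1 ++ (mid ++ P3) := by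
      rw [← hpq, ← hst, hQab, hcd, hP1, hmid, hP3]
      simp
    have hvLi : v ∉ (L i).verts := fun hmem => hvL (Set.mem_iUnion.2 ⟨i, hmem⟩)
    have hnodupLi : (P1 ++ (mid ++ P3)).Nodup := hLi ▸ (L i).nodup
    have hsubnew : List.Sublist (P1 ++ P3) (P1 ++ (mid ++ P3)) :=
      (List.append_sublist_append_left P1).2 (List.sublist_append_right mid P3)
    have hnodupnew : (P1 ++ v :: P3).Nodup := by
      rw [List.nodup_middle, List.nodup_cons]
      refine ⟨?_, hsubnew.nodup hnodupLi⟩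
      intro hmem
      apply hvLi
      rw [hLi]
      simp only [List.mem_append] at hmem ⊢
      tauto
    have hchainP1 : P1.Chain' G.adj := (L i).chain.prefix ⟨mid ++ P3, hLi.symm⟩
    have hchainP3 : P3.Chain' G.adj := (L i).chain.suffix
      ⟨P1 ++ mid, by rw [List.append_assoc]; exact hLi.symm⟩
    have hchainnew : (P1 ++ v :: P3).Chain' G.adj := by
      apply hchainP1.append
      · refine List.isChain_cons.2 ⟨?_, hchainP3⟩
        intro y hy
        rw [hP3] at hy
        simp at hy
        subst hy
        exact hvu
      · intro x hx y hy
        rw [hP1] at hx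
        simp [List.getLast?_append] at hx
        simp at hy
        subst hx; subst hy
        exact hadjx1
    set newP : Dpath G := ⟨P1 ++ v :: P3, by simp, hnodupnew, hchainnew⟩ with hnewP
    have hnewverts : newP.verts = P1 ++ v :: P3 := rfl
    -- ends are preserved
    have hP3last : ∃ w, P3.getLast? = some w := ⟨P3.getLast (by simp [hP3]),
      List.getLast?_eq_getLast _⟩
    obtain ⟨wl, hwl⟩ := hP3last
    have hP1head : ∃ w, P1.head? = some w := ⟨P1.head (by simp [hP1]),
      List.head?_eq_head _⟩
    obtain ⟨wh, hwh⟩ := hP1head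
    have hP1ne : P1 ≠ [] := by rw [hP1]; simp
    have hP3ne : P3 ≠ [] := by rw [hP3]; simp
    have hfirst : newP.first = (L i).first := by
      have hh : newP.verts.head? = (L i).verts.head? := by
        have h1 : newP.verts.head? = P1.head? := by
          rw [hnewverts]; exact head?_append_left P1 _ hP1ne
        have h2 : (L i).verts.head? = P1.head? := by
          rw [hLi]; exact head?_append_left P1 _ hP1ne
        rw [h1, h2]
      rw [List.head?_eq_head newP.ne, List.head?_eq_head (L i).ne] at hh
      exact Option.some.inj hh
    have hlast : newP.last = (L i).last := by
      have hh : newP.verts.getLast? = (L i).verts.getLast? := by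
        have h1 : newP.verts = (P1 ++ [v]) ++ P3 := by rw [hnewverts]; simp
        have h2 : (L i).verts = (P1 ++ mid) ++ P3 := by rw [hLi]; simp
        rw [h1, h2, getLast?_append_right' _ P3 hP3ne, getLast?_append_right' _ P3 hP3ne]
      rw [List.getLast?_eq_getLast newP.ne, List.getLast?_eq_getLast (L i).ne] at hh
      exact Option.some.inj hh
    -- membership facts about the new path
    have hmemnew : ∀ w, w ∈ newP.verts → w = v ∨ w ∈ (L i).verts := by
      intro w hw
      rw [hnewverts] at hw
      rw [hLi]
      simp only [List.mem_append, List.mem_cons] at hw ⊢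
      tauto
    -- the new linkage
    set L' : Fin k → Dpath G := Function.update L i newP with hL'
    have hkey : ∀ j, j ≠ i → Disjoint (L j).support newP.support := by
      intro j hj
      rw [Set.disjoint_left]
      intro w hw hw'
      have hw'' : w = v ∨ w ∈ (L i).verts := hmemnew w hw'
      rcases hw'' with rfl | hwi
      · exact hvL (Set.mem_iUnion.2 ⟨j, hw⟩)
      · exact (Set.disjoint_left.1 (hL.2.1 j i hj)) hw hwi
    have happ : ∀ m : Fin k, L' m = if m = i then newP else L m := by
      intro m; rw [hL', Function.update_apply]
    have hLink' : IsLinkage L' := by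
      intro j j' hjj'
      rw [happ j, happ j']
      by_cases hji : j = i
      · by_cases hj'i : j' = i
        · exact absurd (hji.trans hj'i.symm) hjj'
        · rw [if_pos hji, if_neg hj'i]
          exact (hkey j' hj'i).symm
      · by_cases hj'i : j' = i
        · rw [if_neg hji, if_pos hj'i]
          exact hkey j hji
        · rw [if_neg hji, if_neg hj'i]
          exact hL.2.1 j j' hjj'
    have hends : ∀ j, (L' j).first = (L j).first ∧ (L' j).last = (L j).last := by
      intro j
      rw [happ j]
      by_cases hji : j = i
      · rw [if_pos hji, hji]; exact ⟨hfirst, hlast⟩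
      · rw [if_neg hji]; exact ⟨rfl, rfl⟩
    have hmin := hL.2.2 L' hLink' hends
    -- x2, x3 are deleted, only v is added
    have hx2mid : x2 ∈ mid := by rw [hmid]; simp [hx2b]
    have hx3mid : x3 ∈ mid := by rw [hmid]; simp [hx3b]
    have hmidLi : ∀ w, w ∈ mid → w ∈ (L i).verts := by
      intro w hw; rw [hLi]; simp [hw]
    have hx2S : x2 ∈ linkSupport L := Set.mem_iUnion.2 ⟨i, hmidLi x2 hx2mid⟩
    have hx3S : x3 ∈ linkSupport L := Set.mem_iUnion.2 ⟨i, hmidLi x3 hx3mid⟩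
    have hmid_not_new : ∀ w, w ∈ mid → w ∉ newP.verts := by
      intro w hw hw'
      rw [List.nodup_append] at hnodupLi
      obtain ⟨-, hnd2, hdisj1⟩ := hnodupLi
      rw [List.nodup_append] at hnd2
      obtain ⟨-, -, hdisj2⟩ := hnd2
      rw [hnewverts] at hw'
      simp only [List.mem_append, List.mem_cons] at hw'
      rcases hw' with h | h | h
      · exact hdisj1 w h w (by simp [hw]) rfl
      · subst h; exact hvLi (hmidLi w hw)
      · exact hdisj2 w hw w h rfl
    have hsubS' : linkSupport L' ⊆ (insert v (linkSupport L)) \ {x2, x3} := by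
      intro w hw
      obtain ⟨j, hwj⟩ := Set.mem_iUnion.1 hw
      rw [happ j] at hwj
      constructor
      · by_cases hji : j = i
        · rw [if_pos hji] at hwj
          rcases hmemnew w hwj with rfl | hwi
          · exact Set.mem_insert _ _
          · exact Set.mem_insert_of_mem _ (Set.mem_iUnion.2 ⟨i, hwi⟩)
        · rw [if_neg hji] at hwj
          exact Set.mem_insert_of_mem _ (Set.mem_iUnion.2 ⟨j, hwj⟩)
      · intro hw23
        simp only [Set.mem_insert_iff, Set.mem_singleton_iff] at hw23
        have hwmid : w ∈ mid := by
          rcases hw23 with rfl | rfl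
          · exact hx2mid
          · exact hx3mid
        by_cases hji : j = i
        · rw [if_pos hji] at hwj
          exact hmid_not_new w hwmid hwj
        · rw [if_neg hji] at hwj
          exact (Set.disjoint_left.1 (hL.2.1 j i hji)) hwj (hmidLi w hwmid)
    -- cardinality contradiction
    have hvS : v ∉ linkSupport L := hvL
    have h23sub : ({x2, x3} : Set V) ⊆ insert v (linkSupport L) := by
      intro w hw
      simp only [Set.mem_insert_iff, Set.mem_singleton_iff] at hw
      rcases hw with rfl | rfl
      · exact Set.mem_insert_of_mem _ hx2S
      · exact Set.mem_insert_of_mem _ hx3S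
    have hn1 : (insert v (linkSupport L)).ncard = (linkSupport L).ncard + 1 :=
      Set.ncard_insert_of_notMem hvS (Set.toFinite _)
    have hn2 : ((insert v (linkSupport L)) \ ({x2, x3} : Set V)).ncard
        = (insert v (linkSupport L)).ncard - 2 := by
      rw [Set.ncard_diff h23sub (Set.toFinite _), Set.ncard_pair hx23]
    have hnle : (linkSupport L').ncard
        ≤ ((insert v (linkSupport L)) \ ({x2, x3} : Set V)).ncard :=
      Set.ncard_le_ncard hsubS' (Set.toFinite _)
    have hpos : 1 ≤ (linkSupport L).ncard := by
      have : (linkSupport L).Nonempty := ⟨x2, hx2S⟩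
      have := Set.ncard_pos (Set.toFinite _) |>.2 this
      omega
    omega
end

section
/- Let L=(P_1,…,P_k) be a minimum linkage for a problem instance (G,s_1,t_1,…,s_k,t_k), let C be a clique of G, let B⊆C be C-acceptable for L, and set A=C∖B. Let i∈{1,…,k} and suppose P_i has a vertex in A∖{t_i}; let r_i be the first such vertex along P_i and let q_i be the vertex immediately preceding r_i on P_i. Then: the only edge of G from V(P_i)∩B to V(P_i)∩A (if there is one) is q_i r_i; every three-vertex directed path of G from V(P_i)∩B to V(P_i)∩A whose internal vertex lies in V(G)∖V(L) uses at least one of q_i, r_i; and there is no planar (P_i,P_i)-matching from B to A of cardinality three internally disjoint from L. -/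
open scoped Classical

section AuxLemmas

variable {V : Type}

lemma nodup_getElem_inj {l : List V} (hnd : l.Nodup) {i j : ℕ}
    (hi : i < l.length) (hj : j < l.length) (h : l[i] = l[j]) : i = j := by
  have := List.nodup_iff_injective_getElem.mp hnd
    (a₁ := ⟨i, hi⟩) (a₂ := ⟨j, hj⟩) h
  exact congrArg Fin.val this

lemma getElem_index_congr {l : List V} {i j : ℕ} (h : i = j) (hi : i < l.length) :
    l[i]'hi = l[j]'(h ▸ hi) := by subst h; rfl

lemma mem_take_iff' {l : List V} (hnd : l.Nodup) {i c : ℕ} (hi : i < l.length) :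
    l[i] ∈ l.take c ↔ i < c := by
  constructor
  · intro h
    obtain ⟨j, hj, hje⟩ := List.mem_iff_getElem.mp h
    have hj' : j < c ∧ j < l.length := by
      simp only [List.length_take] at hj; omega
    rw [List.getElem_take] at hje
    have := nodup_getElem_inj hnd hj'.2 hi hje
    omega
  · intro h
    have hlt : i < (l.take c).length := by simp only [List.length_take]; omega
    have : (l.take c)[i] = l[i] := List.getElem_take
    exact this ▸ List.getElem_mem hlt

lemma mem_take_ex {l : List V} {c : ℕ} {x : V} (h : x ∈ l.take c) :
    ∃ j, ∃ hj : j < l.length, j < c ∧ l[j] = x := by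
  obtain ⟨j, hj, hje⟩ := List.mem_iff_getElem.mp h
  have hj' : j < c ∧ j < l.length := by
    simp only [List.length_take] at hj; omega
  rw [List.getElem_take] at hje
  exact ⟨j, hj'.2, hj'.1, hje⟩

lemma mem_drop_ex {l : List V} {c : ℕ} {x : V} (h : x ∈ l.drop c) :
    ∃ j, ∃ hj : j < l.length, c ≤ j ∧ l[j] = x := by
  obtain ⟨j, hj, hje⟩ := List.mem_iff_getElem.mp h
  have hj' : c + j < l.length := by
    simp only [List.length_drop] at hj; omega
  rw [List.getElem_drop] at hje
  exact ⟨c + j, hj', by omega, hje⟩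

end AuxLemmas

lemma shortcut {V : Type} [Fintype V] {k : ℕ} {G : Dgraph V} {L : Fin k → Dpath G}
    (hL : IsMinimumLinkage L) (i : Fin k) {a b : ℕ}
    (ha : a < (L i).verts.length) (hb : b < (L i).verts.length)
    (mid : List V) (hmidS : ∀ x ∈ mid, x ∉ linkSupport L) (hmidnd : mid.Nodup)
    (hchain : List.Chain' G.adj ((L i).verts[a] :: (mid ++ [(L i).verts[b]])))
    (hlen : mid.length + 1 < b - a) : False := by
  classical
  set v := (L i).verts with hvdef
  have hvnd : v.Nodup := (L i).nodup
  have hsuppmem : ∀ x ∈ v, x ∈ linkSupport L := fun x hx => Set.mem_iUnion.mpr ⟨i, hx⟩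
  have hmidv : ∀ x ∈ mid, x ∉ v := fun x hx hxv => hmidS x hx (hsuppmem x hxv)
  set w' : List V := v.take (a + 1) ++ (mid ++ v.drop b) with hw'
  have htklen : (v.take (a + 1)).length = a + 1 := by
    simp only [List.length_take]; omega
  have hdrne : v.drop b ≠ [] := by
    intro h
    have := congrArg List.length h
    simp only [List.length_drop, List.length_nil] at this
    omega
  have hw'ne : w' ≠ [] := by
    intro h
    have := congrArg List.length h
    simp only [hw', List.length_append, List.length_nil, htklen] at this
    omega
  -- nodup
  have hw'nd : w'.Nodup := by
    rw [hw', List.nodup_append]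
    refine ⟨(List.take_sublist _ _).nodup hvnd, ?_, ?_⟩
    · rw [List.nodup_append]
      refine ⟨hmidnd, (List.drop_sublist _ _).nodup hvnd, ?_⟩
      intro x hx y hy hxy
      subst hxy
      exact hmidv x hx (List.drop_subset _ _ hy)
    · intro x hx y hx2 hxy
      subst hxy
      obtain ⟨j, hj, hja, hje⟩ := mem_take_ex hx
      rcases List.mem_append.mp hx2 with h | h
      · exact hmidv x h (List.take_subset _ _ hx)
      · obtain ⟨j2, hj2, hjb, hje2⟩ := mem_drop_ex h
        have : j = j2 := nodup_getElem_inj hvnd hj hj2 (hje.trans hje2.symm)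
        omega
  -- chain
  have hdrophead : (v.drop b).head? = some (v[b]'hb) := by
    rw [List.head?_drop, List.getElem?_eq_getElem hb]
  have hchain2 : List.Chain' G.adj (mid ++ [v[b]'hb]) := hchain.tail
  have hw'chain : List.Chain' G.adj w' := by
    rw [hw']
    show List.IsChain G.adj _
    rw [List.isChain_append]
    refine ⟨List.IsChain.take (L i).chain _, ?_, ?_⟩
    · rw [List.isChain_append]
      obtain ⟨h1, _, h3⟩ := List.isChain_append.mp hchain2
      refine ⟨h1, List.IsChain.drop (L i).chain _, ?_⟩
      intro x hx y hy
      rw [hdrophead, Option.mem_def, Option.some_inj] at hy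
      subst hy
      exact h3 x hx _ rfl
    · intro x hx y hy
      have htake : v.take (a + 1) = v.take a ++ [v[a]'ha] := by
        rw [List.take_succ, List.getElem?_eq_getElem ha]; rfl
      rw [htake, List.getLast?_concat, Option.mem_def, Option.some_inj] at hx
      subst hx
      have hhead := (List.isChain_cons.mp hchain).1
      rw [List.head?_append, hdrophead] at hy
      apply hhead
      rw [List.head?_append]
      simpa using hy
  set P' : Dpath G := ⟨w', hw'ne, hw'nd, hw'chain⟩ with hP'def
  set L' : Fin k → Dpath G := Function.update L i P' with hL'def
  have hupd : ∀ t, L' t = if h : t = i then P' else L t := by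
    intro t
    by_cases h : t = i
    · subst h; simp [hL'def]
    · simp [hL'def, Function.update_of_ne h, h]
  have hP'supp : P'.support ⊆ (L i).support ∪ {x | x ∈ mid} := by
    intro x hx
    have hx' : x ∈ w' := hx
    rcases List.mem_append.mp hx' with h | h
    · exact Or.inl (List.take_subset _ _ h)
    · rcases List.mem_append.mp h with h | h
      · exact Or.inr h
      · exact Or.inl (List.drop_subset _ _ h)
  have hLsupp : ∀ j, (L j).support ⊆ linkSupport L := fun j x hx => Set.mem_iUnion.mpr ⟨j, hx⟩
  have hdisjP' : ∀ j, j ≠ i → Disjoint P'.support (L j).support := by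
    intro j hj
    rw [Set.disjoint_left]
    intro x hx hxj
    rcases hP'supp hx with h | h
    · exact Set.disjoint_left.mp (hL.1 i j (Ne.symm hj)) h hxj
    · exact hmidS x h (hLsupp j hxj)
  have hlink' : IsLinkage L' := by
    intro j j' hjj'
    rw [hupd j, hupd j']
    by_cases h1 : j = i
    · by_cases h2 : j' = i
      · exact absurd (h1.trans h2.symm) hjj'
      · simp only [dif_pos h1, dif_neg h2]; exact hdisjP' j' h2
    · by_cases h2 : j' = i
      · simp only [dif_neg h1, dif_pos h2]; exact (hdisjP' j h1).symm
      · simp only [dif_neg h1, dif_neg h2]; exact hL.1 j j' hjj'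
  have hfirstP' : P'.first = (L i).first := by
    have hvne : v ≠ [] := (L i).ne
    have h0 : 0 < v.length := List.length_pos_iff.mpr hvne
    have h0' : 0 < (v.take (a + 1)).length := by rw [htklen]; omega
    have htkne : v.take (a + 1) ≠ [] := by
      intro h; rw [h] at h0'; simp at h0'
    have h1 : w'.head? = some (v[0]'h0) := by
      rw [hw', List.head?_append, List.head?_eq_getElem?,
        List.getElem?_eq_getElem h0', List.getElem_take]
      rfl
    have h2 : v.head? = some (v[0]'h0) := by
      rw [List.head?_eq_getElem?, List.getElem?_eq_getElem h0]
    have h3 := h1.trans h2.symm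
    show w'.head _ = v.head _
    rwa [List.head?_eq_head hw'ne, List.head?_eq_head hvne, Option.some_inj] at h3
  have hlastP' : P'.last = (L i).last := by
    show w'.getLast _ = v.getLast _
    have h1 : w'.getLast? = (v.drop b).getLast? := by
      rw [hw', List.getLast?_append, List.getLast?_append,
        List.getLast?_eq_getLast hdrne]
      rfl
    have h2 : v.getLast? = (v.drop b).getLast? := by
      conv_lhs => rw [← List.take_append_drop b v]
      rw [List.getLast?_append, List.getLast?_eq_getLast hdrne]
      rfl
    have h3 := h1.trans h2.symm
    rwa [List.getLast?_eq_getLast hw'ne, List.getLast?_eq_getLast (L i).ne,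
      Option.some_inj] at h3
  have hends : ∀ j, (L' j).first = (L j).first ∧ (L' j).last = (L j).last := by
    intro j
    rw [hupd j]
    by_cases h : j = i
    · simp only [dif_pos h]
      subst h
      exact ⟨hfirstP', hlastP'⟩
    · simp [dif_neg h]
  have hmin := hL.2 L' hlink' hends
  -- counting
  set slice : List V := (v.drop (a + 1)).take (b - (a + 1)) with hslice
  have hslicelen : slice.length = b - (a + 1) := by
    simp only [hslice, List.length_take, List.length_drop]; omega
  have hslicend : slice.Nodup :=
    ((List.take_sublist _ _).trans (List.drop_sublist _ _)).nodup hvnd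
  have hslicemem : ∀ x ∈ slice, ∃ j, ∃ hj : j < v.length, a < j ∧ j < b ∧ v[j] = x := by
    intro x hx
    obtain ⟨j, hj, hje⟩ := List.mem_iff_getElem.mp hx
    rw [hslicelen] at hj
    rw [List.getElem_take, List.getElem_drop] at hje
    exact ⟨a + 1 + j, by omega, by omega, by omega, hje⟩
  set S : Set V := linkSupport L with hSdef
  set S' : Set V := linkSupport L' with hS'def2
  set R : Set V := {x | x ∈ slice} with hR
  set Mset : Set V := {x | x ∈ mid} with hMdef
  have hRS : R ⊆ S := fun x hx =>
    hsuppmem x (List.drop_subset _ _ (List.take_subset _ _ hx))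
  have hS'sub : S' ⊆ (S \ R) ∪ Mset := by
    intro x hx
    obtain ⟨j, hxj⟩ := Set.mem_iUnion.mp hx
    by_cases h : j = i
    · rw [hupd j] at hxj
      simp only [dif_pos h] at hxj
      have hx' : x ∈ w' := hxj
      have hnotR : ∀ j2, ∀ hj2 : j2 < v.length, (j2 ≤ a ∨ b ≤ j2) → v[j2] = x → x ∉ R := by
        intro j2 hj2 hside hje hxR
        obtain ⟨j3, hj3, hja3, hjb3, hje3⟩ := hslicemem x hxR
        have : j2 = j3 := nodup_getElem_inj hvnd hj2 hj3 (hje.trans hje3.symm)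
        omega
      rcases List.mem_append.mp hx' with h1 | h1
      · obtain ⟨j2, hj2, hja, hje⟩ := mem_take_ex h1
        exact Or.inl ⟨hsuppmem x (hje ▸ List.getElem_mem hj2),
          hnotR j2 hj2 (Or.inl (by omega)) hje⟩
      · rcases List.mem_append.mp h1 with h1 | h1
        · exact Or.inr h1
        · obtain ⟨j2, hj2, hjb, hje⟩ := mem_drop_ex h1
          exact Or.inl ⟨hsuppmem x (hje ▸ List.getElem_mem hj2),
            hnotR j2 hj2 (Or.inr hjb) hje⟩
    · rw [hupd j] at hxj
      simp only [dif_neg h] at hxj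
      refine Or.inl ⟨hLsupp j hxj, fun hxR => ?_⟩
      obtain ⟨j3, hj3, _, _, hje3⟩ := hslicemem x hxR
      exact Set.disjoint_left.mp (hL.1 j i h) hxj (hje3 ▸ List.getElem_mem hj3)
  have hRcard : R.ncard = b - (a + 1) := by
    have hRfin : R = ↑slice.toFinset := by
      ext x; simp [hR, List.mem_toFinset]
    rw [hRfin, Set.ncard_coe_finset, List.toFinset_card_of_nodup hslicend, hslicelen]
  have hMcard : Mset.ncard ≤ mid.length := by
    have hMfin : Mset = ↑mid.toFinset := by
      ext x; simp [hMdef, List.mem_toFinset]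
    rw [hMfin, Set.ncard_coe_finset]
    exact mid.toFinset_card_le
  have h1 : S'.ncard ≤ (S \ R).ncard + Mset.ncard :=
    le_trans (Set.ncard_le_ncard hS'sub (Set.toFinite _)) (Set.ncard_union_le _ _)
  have h2 : (S \ R).ncard = S.ncard - R.ncard := Set.ncard_diff hRS (Set.toFinite _)
  have h3 : R.ncard ≤ S.ncard := Set.ncard_le_ncard hRS (Set.toFinite _)
  omega

/-- Step (1) of the proof of Theorem 3.1: properties of the first vertex `r` of `P i` in
`A ∖ {t i}` (where `A = C ∖ B`) and its predecessor `q` on `P i`. -/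
theorem first_crossing_properties {V : Type} [Fintype V] {k : ℕ} (G : Dgraph V)
    (sv tv : Fin k → V) (hinst : IsInstance sv tv)
    (L : Fin k → Dpath G) (hL : IsMinimumLinkageFor L sv tv)
    (C : Set V) (hC : G.IsClique C)
    (B : Set V) (hacc : CAcceptable sv tv L C B)
    (i : Fin k) (m : ℕ) (hm : m < (L i).verts.length) (hm0 : 0 < m)
    (hr : (L i).verts.get ⟨m, hm⟩ ∈ ((C \ B) \ {tv i}))
    (hfirst : ∀ j, ∀ (hj : j < (L i).verts.length), j < m →
      (L i).verts.get ⟨j, hj⟩ ∉ ((C \ B) \ {tv i})) :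
    (∀ u ∈ (L i).support ∩ B, ∀ x ∈ (L i).support ∩ (C \ B), G.adj u x →
      u = (L i).verts.get ⟨m - 1, by omega⟩ ∧ x = (L i).verts.get ⟨m, hm⟩) ∧
    (∀ u w x : V, u ∈ (L i).support ∩ B → x ∈ (L i).support ∩ (C \ B) →
      w ∉ linkSupport L → G.adj u w → G.adj w x →
      (L i).verts.get ⟨m - 1, by omega⟩ ∈ ({u, w, x} : Set V) ∨
        (L i).verts.get ⟨m, hm⟩ ∈ ({u, w, x} : Set V)) ∧
    ¬ ∃ M : Fin 3 → Dpath G,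
        IsPlanarMatchingFromTo (L i) (L i) M B (C \ B) ∧ InternallyDisjointFrom M L := by
  classical
  obtain ⟨⟨hlink, hends⟩, hminL⟩ := hL
  obtain ⟨hBC, hsB, htB, hinitp, hmat⟩ := hacc
  obtain ⟨Q, hQpre, hQC⟩ := hinitp i
  set v := (L i).verts with hvdef
  have hvnd : v.Nodup := (L i).nodup
  have hQtake : Q.verts = v.take Q.verts.length := List.prefix_iff_eq_take.mp hQpre
  have hrm : v[m]'hm ∈ (C \ B) \ {tv i} := hr
  have hrC : v[m]'hm ∈ C := hrm.1.1
  have hrB : v[m]'hm ∉ B := hrm.1.2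
  have hrQ : (v[m]'hm) ∉ Q.verts := by
    intro hmem
    have h2 : v[m]'hm ∈ Q.support ∩ C := ⟨hmem, hrC⟩
    rw [hQC] at h2
    exact hrB h2.2
  have hlQ : Q.verts.length ≤ m := by
    by_contra h
    push_neg at h
    apply hrQ
    rw [hQtake]
    exact (mem_take_iff' hvnd hm).mpr h
  have F_B : ∀ a : ℕ, ∀ ha : a < v.length, v[a] ∈ B → a < m := by
    intro a ha haB
    have hmemQ : v[a] ∈ Q.verts := by
      have h2 : v[a] ∈ (L i).support ∩ B := ⟨List.getElem_mem ha, haB⟩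
      rw [← hQC] at h2
      exact h2.1
    rw [hQtake] at hmemQ
    have := (mem_take_iff' hvnd ha).mp hmemQ
    omega
  have htvi : tv i = v[v.length - 1]'(by omega) := by
    have h1 : (L i).last = tv i := (hends i).2
    rw [← h1]
    show v.getLast _ = _
    rw [List.getLast_eq_getElem]
  have F_A : ∀ b : ℕ, ∀ hb : b < v.length, v[b] ∈ C \ B → m ≤ b := by
    intro b hb hbA
    by_contra h
    push_neg at h
    have hnot := hfirst b hb h
    have heq : v[b] = tv i := by
      by_contra hne
      exact hnot ⟨hbA, hne⟩
    rw [htvi] at heq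
    have := nodup_getElem_inj hvnd hb (by omega) heq
    omega
  have c1 : ∀ u ∈ (L i).support ∩ B, ∀ x ∈ (L i).support ∩ (C \ B), G.adj u x →
      u = v[m - 1]'(by omega) ∧ x = v[m]'hm := by
    intro u hu x hx hadj
    obtain ⟨huv, huB⟩ := hu
    obtain ⟨hxv, hxA⟩ := hx
    obtain ⟨a, ha, hae⟩ := List.mem_iff_getElem.mp (show u ∈ v from huv)
    obtain ⟨b, hb, hbe⟩ := List.mem_iff_getElem.mp (show x ∈ v from hxv)
    have ham : a < m := F_B a ha (by rw [hae]; exact huB)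
    have hbm : m ≤ b := F_A b hb (by rw [hbe]; exact hxA)
    have hab : a = m - 1 ∧ b = m := by
      by_contra hcon
      refine shortcut hminL i ha hb [] (by simp) (by simp) ?_ ?_
      · have hadj' : G.adj (v[a]'ha) (v[b]'hb) := by rw [hae, hbe]; exact hadj
        simpa [List.Chain', List.isChain_pair] using hadj'
      · simp only [List.length_nil]; omega
    obtain ⟨ham1, hbm1⟩ := hab
    subst ham1
    subst hbm1
    exact ⟨hae.symm, hbe.symm⟩
  have c2 : ∀ u w x : V, u ∈ (L i).support ∩ B → x ∈ (L i).support ∩ (C \ B) →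
      w ∉ linkSupport L → G.adj u w → G.adj w x →
      (v[m - 1]'(by omega)) ∈ ({u, w, x} : Set V) ∨
        (v[m]'hm) ∈ ({u, w, x} : Set V) := by
    intro u w x hu hx hwL hadj1 hadj2
    by_contra hcon
    push_neg at hcon
    obtain ⟨hconq, hconr⟩ := hcon
    obtain ⟨a, ha, hae⟩ := List.mem_iff_getElem.mp (show u ∈ v from hu.1)
    obtain ⟨b, hb, hbe⟩ := List.mem_iff_getElem.mp (show x ∈ v from hx.1)
    have ham : a < m := F_B a ha (by rw [hae]; exact hu.2)
    have hbm : m ≤ b := F_A b hb (by rw [hbe]; exact hx.2)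
    have hane : a ≠ m - 1 := by
      intro h
      apply hconq
      left
      rw [← hae]
      exact getElem_index_congr h.symm _
    have hbne : b ≠ m := by
      intro h
      apply hconr
      right; right
      rw [← hbe]
      show v[m] = v[b]
      exact getElem_index_congr h.symm _
    refine shortcut hminL i ha hb [w] (by simpa using hwL) (by simp) ?_ ?_
    · have h1 : G.adj (v[a]'ha) w := by rw [hae]; exact hadj1
      have h2 : G.adj w (v[b]'hb) := by rw [hbe]; exact hadj2
      simp only [List.Chain', List.singleton_append, List.isChain_cons_cons, List.isChain_pair]
      exact ⟨h1, h2, List.isChain_singleton _⟩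
    · simp only [List.length_singleton]; omega
  refine ⟨c1, c2, ?_⟩
  rintro ⟨M, ⟨⟨hMlink, hMlen3, hMfst, hMlst⟩, hMBA⟩, hMint⟩
  have key : ∀ j : Fin 3,
      (v[m - 1]'(by omega)) ∈ (M j).support ∨ (v[m]'hm) ∈ (M j).support := by
    intro j
    have hjne : (M j).verts ≠ [] := (M j).ne
    have hfstmem : (M j).first ∈ (L i).support := by
      apply hMfst.subset
      rw [List.mem_ofFn]
      exact ⟨j, rfl⟩
    have hlstmem : (M j).last ∈ (L i).support := by
      apply hMlst.subset
      rw [List.mem_ofFn]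
      exact ⟨j, rfl⟩
    have hfB := (hMBA j).1
    have hlA := (hMBA j).2
    set l := (M j).verts with hldef
    have hllen1 : 0 < l.length := List.length_pos_iff.mpr hjne
    have hlen3 : l.length ≤ 3 := hMlen3 j
    have hfirst0 : (M j).first = l[0]'hllen1 := List.head_eq_getElem _
    have hlastl : (M j).last = l[l.length - 1]'(by omega) := List.getLast_eq_getElem _
    have hndl : l.Nodup := (M j).nodup
    have hlen2 : 2 ≤ l.length := by
      rcases Nat.lt_or_ge l.length 2 with hc | hc
      · exfalso
        have heq : (M j).first = (M j).last := by
          rw [hfirst0, hlastl]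
          exact getElem_index_congr (by omega) _
        exact hlA.2 (heq ▸ hfB)
      · exact hc
    have hadj : ∀ t : ℕ, ∀ ht : t + 1 < l.length, G.adj (l[t]'(by omega)) (l[t + 1]'ht) := by
      intro t ht
      have hchl : List.Chain' G.adj l := (M j).chain
      have := List.isChain_iff_getElem.mp hchl t (by omega)
      simpa using this
    rcases (show l.length = 2 ∨ l.length = 3 by omega) with h2 | h3
    · have hlast1 : (M j).last = l[1]'(by omega) := by
        rw [hlastl]
        exact getElem_index_congr (by omega) _
      have hadjfl : G.adj (M j).first (M j).last := by
        rw [hfirst0, hlast1]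
        exact hadj 0 (by omega)
      obtain ⟨hq, _⟩ := c1 _ ⟨hfstmem, hfB⟩ _ ⟨hlstmem, hlA⟩ hadjfl
      left
      have hmem1 : (M j).first ∈ (M j).support := by
        show (M j).first ∈ l
        rw [hfirst0]
        exact List.getElem_mem _
      exact hq ▸ hmem1
    · have hw1 : 1 < l.length := by omega
      have hadj01 : G.adj ((M j).first) (l[1]'hw1) := by
        rw [hfirst0]; exact hadj 0 (by omega)
      have hlast2 : (M j).last = l[2]'(by omega) := by
        rw [hlastl]
        exact getElem_index_congr (by omega) _
      have hadj12 : G.adj (l[1]'hw1) ((M j).last) := by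
        rw [hlast2]; exact hadj 1 (by omega)
      have hwsuppj : (l[1]'hw1) ∈ (M j).support := List.getElem_mem _
      have hwvl : (l[1]'hw1) ∈ linkSupport M := Set.mem_iUnion.mpr ⟨j, hwsuppj⟩
      have hwne0 : (l[1]'hw1) ≠ (M j).first := by
        rw [hfirst0]
        intro h
        have := nodup_getElem_inj hndl hw1 hllen1 h
        omega
      have hwne2 : (l[1]'hw1) ≠ (M j).last := by
        rw [hlast2]
        intro h
        have := nodup_getElem_inj hndl hw1 (by omega) h
        omega
      have hwint : (l[1]'hw1) ∈ internalVerts M := by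
        constructor
        · exact hwvl
        · intro hmem
          rcases hmem with hmem | hmem <;> obtain ⟨j', hj'⟩ := hmem
          · rcases eq_or_ne j' j with rfl | hne
            · exact hwne0 hj'.symm
            · have hfm : (M j').first ∈ (M j').support := List.head_mem _
              exact Set.disjoint_left.mp (hMlink j' j hne) (hj' ▸ hfm) hwsuppj
          · rcases eq_or_ne j' j with rfl | hne
            · exact hwne2 hj'.symm
            · have hfm : (M j').last ∈ (M j').support := List.getLast_mem _
              exact Set.disjoint_left.mp (hMlink j' j hne) (hj' ▸ hfm) hwsuppj
      have hwL : (l[1]'hw1) ∉ linkSupport L := hMint _ hwint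
      have hkey := c2 ((M j).first) (l[1]'hw1) ((M j).last)
        ⟨hfstmem, hfB⟩ ⟨hlstmem, hlA⟩ hwL hadj01 hadj12
      have hmemf : (M j).first ∈ (M j).support := by
        show (M j).first ∈ l
        rw [hfirst0]; exact List.getElem_mem _
      have hmeml : (M j).last ∈ (M j).support := by
        show (M j).last ∈ l
        rw [hlastl]; exact List.getElem_mem _
      rcases hkey with h | h
      · left
        simp only [Set.mem_insert_iff, Set.mem_singleton_iff] at h
        rcases h with h | h | h
        · exact h ▸ hmemf
        · exact h ▸ hwsuppj
        · exact h ▸ hmeml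
      · right
        simp only [Set.mem_insert_iff, Set.mem_singleton_iff] at h
        rcases h with h | h | h
        · exact h ▸ hmemf
        · exact h ▸ hwsuppj
        · exact h ▸ hmeml
  have d01 := hMlink 0 1 (by decide)
  have d02 := hMlink 0 2 (by decide)
  have d12 := hMlink 1 2 (by decide)
  rcases key 0 with h0 | h0 <;> rcases key 1 with h1 | h1 <;> rcases key 2 with h2 | h2
  · exact Set.disjoint_left.mp d01 h0 h1
  · exact Set.disjoint_left.mp d01 h0 h1
  · exact Set.disjoint_left.mp d02 h0 h2
  · exact Set.disjoint_left.mp d12 h1 h2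
  · exact Set.disjoint_left.mp d12 h1 h2
  · exact Set.disjoint_left.mp d02 h0 h2
  · exact Set.disjoint_left.mp d01 h0 h1
  · exact Set.disjoint_left.mp d01 h0 h1
end

section
/- Let k,c≥1 and z=c(c(k²+k+1)+k+2). Let (G,s_1,t_1,…,s_k,t_k) be a problem instance where G has a clique-partition (C_1,…,C_c), let L=(P_1,…,P_k) be a minimum linkage for it, let B⊆V(L) be acceptable, and set A=V(G)∖B. Let a∈{1,…,c}, let r_a∈(C_a∩A∩V(L))∖{t_1,…,t_k} be such that (B∩C_a)∪{r_a} is C_a-acceptable for L, and let i∈{1,…,k} be such that r_a∈V(P_i). If B∪{r_a} is not acceptable, then there exists b∈{1,…,c} with b≠a such that the (B∩C_a, A∩C_b)-wiggle number of P_i is at least z. -/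
open scoped Classical

section AuxWiggle

variable {V : Type} {G : Dgraph V}

lemma hasAlt_zero (P : Dpath G) (X Y : Set V) : HasAlt P X Y 0 :=
  ⟨[], List.nil_sublist _, rfl, fun i h => absurd h (by simp)⟩

lemma hasAlt_mono {P : Dpath G} {X X' Y Y' : Set V} (hX : X ⊆ X') (hY : Y ⊆ Y')
    {m : ℕ} (h : HasAlt P X Y m) : HasAlt P X' Y' m := by
  obtain ⟨l, hl, hlen, halt⟩ := h
  refine ⟨l, hl, hlen, fun q hq => ?_⟩
  have h := halt q hq
  by_cases hpar : q % 2 = 0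
  · rw [if_pos hpar] at h ⊢; exact hX h
  · rw [if_neg hpar] at h ⊢; exact hY h

lemma bddAbove_hasAlt [Fintype V] (P : Dpath G) (X Y : Set V) :
    BddAbove {m | HasAlt P X Y m} := by
  refine ⟨Fintype.card V, fun m hm => ?_⟩
  obtain ⟨l, hl, hlen, -⟩ := hm
  have h1 : l.length ≤ P.verts.length := hl.length_le
  have h2 := (P.nodup).length_le_card
  omega

lemma hasAlt_wiggle [Fintype V] (P : Dpath G) (X Y : Set V) : HasAlt P X Y (wiggle P X Y) := by
  have h0 : (0 : ℕ) ∈ {m | HasAlt P X Y m} := hasAlt_zero P X Y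
  exact Nat.sSup_mem ⟨0, h0⟩ (bddAbove_hasAlt P X Y)

lemma le_wiggle [Fintype V] {P : Dpath G} {X Y : Set V} {m : ℕ} (h : HasAlt P X Y m) :
    m ≤ wiggle P X Y := le_csSup (bddAbove_hasAlt P X Y) h

lemma alternating_of_not_mem {X Y : Set V} {ra : V} {l : List V}
    (halt : Alternating (insert ra X) Y l) (hra : ra ∉ l) : Alternating X Y l := by
  intro q hq
  have h := halt q hq
  by_cases hpar : q % 2 = 0
  · rw [if_pos hpar] at h ⊢
    rcases Set.mem_insert_iff.mp h with heq | hx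
    · exact absurd (heq ▸ List.get_mem l ⟨q, hq⟩) hra
    · exact hx
  · rwa [if_neg hpar] at h ⊢

lemma alternating_remove {X Y : Set V} {ra : V} {l : List V} (hnd : l.Nodup)
    (hmem : ra ∈ l) (hraY : ra ∉ Y) {m : ℕ}
    (hlen : l.length = 2 * m) (halt : Alternating (insert ra X) Y l) :
    ∃ l', l'.Sublist l ∧ l'.length = 2 * (m - 1) ∧ Alternating X Y l' := by
  obtain ⟨p, hp, hpe⟩ := List.mem_iff_getElem.mp hmem
  have hpar : p % 2 = 0 := by
    by_contra hodd
    have h := halt p hp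
    rw [if_neg hodd, List.get_eq_getElem, hpe] at h
    exact hraY h
  have hple : p + 2 ≤ l.length := by omega
  have hm1 : 1 ≤ m := by
    rcases Nat.eq_zero_or_pos m with h0 | h1
    · rw [h0, Nat.mul_zero] at hlen; omega
    · exact h1
  refine ⟨l.take p ++ l.drop (p + 2), ?_, ?_, ?_⟩
  · have h1 := List.drop_sublist 2 (l.drop p)
    rw [List.drop_drop] at h1
    have h2 : (l.drop (p + 2)).Sublist (l.drop p) := by
      simpa [Nat.add_comm] using h1
    have h3 := h2.append_left (l.take p)
    rwa [List.take_append_drop] at h3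
  · rw [List.length_append, List.length_take, List.length_drop]; omega
  · intro q hq
    have hlen' : (l.take p ++ l.drop (p + 2)).length = l.length - 2 := by
      rw [List.length_append, List.length_take, List.length_drop]; omega
    by_cases hqp : q < p
    · have hql : q < l.length := by omega
      have hq' : q < (l.take p).length := by rw [List.length_take]; omega
      have hget : (l.take p ++ l.drop (p + 2)).get ⟨q, hq⟩ = l[q]'hql := by
        rw [List.get_eq_getElem, List.getElem_append_left hq', List.getElem_take]
      have h := halt q hql
      rw [hget]
      by_cases hpar' : q % 2 = 0
      · rw [if_pos hpar'] at h ⊢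
        rw [List.get_eq_getElem] at h
        rcases Set.mem_insert_iff.mp h with heq | hx
        · exfalso
          have hqpe : q = p := hnd.getElem_inj_iff.mp (heq.trans hpe.symm)
          omega
        · exact hx
      · rw [if_neg hpar'] at h ⊢
        rwa [List.get_eq_getElem] at h
    · have hq2 : q + 2 < l.length := by omega
      have hq' : (l.take p).length ≤ q := by rw [List.length_take]; omega
      have hget : (l.take p ++ l.drop (p + 2)).get ⟨q, hq⟩ = l[q + 2]'hq2 := by
        rw [List.get_eq_getElem, List.getElem_append_right hq']
        simp only [List.length_take, Nat.min_eq_left (le_of_lt hp), List.getElem_drop]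
        have hidx : p + 2 + (q - p) = q + 2 := by omega
        simp only [hidx]
      have h := halt (q + 2) hq2
      rw [hget]
      by_cases hpar' : q % 2 = 0
      · rw [if_pos (show (q + 2) % 2 = 0 by omega)] at h
        rw [if_pos hpar']
        rw [List.get_eq_getElem] at h
        rcases Set.mem_insert_iff.mp h with heq | hx
        · exfalso
          have hqpe : q + 2 = p := hnd.getElem_inj_iff.mp (heq.trans hpe.symm)
          omega
        · exact hx
      · rw [if_neg (show ¬ (q + 2) % 2 = 0 by omega)] at h
        rw [if_neg hpar']
        rwa [List.get_eq_getElem] at h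

end AuxWiggle
/-- Step (1) of the proof of Theorem 3.3: if `B ∪ {r a}` fails to be acceptable, some
other block `C b` witnesses a large `(B ∩ C a, A ∩ C b)`-wiggle number on `P i`. -/
theorem wiggle_witness {V : Type} [Fintype V] {k c : ℕ} (hk : 1 ≤ k) (hc : 1 ≤ c)
    (G : Dgraph V) (sv tv : Fin k → V) (hinst : IsInstance sv tv)
    (C : Fin c → Set V) (hpart : G.IsCliquePartition C)
    (L : Fin k → Dpath G) (hL : IsMinimumLinkageFor L sv tv)
    (B : Set V) (hBL : B ⊆ linkSupport L)
    (hacc : Acceptable sv tv L C (zOf k c) B)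
    (a : Fin c) (ra : V)
    (hra : ra ∈ ((C a ∩ Bᶜ ∩ linkSupport L) \ Set.range tv))
    (hCacc : CAcceptable sv tv L (C a) (insert ra (B ∩ C a)))
    (i : Fin k) (hri : ra ∈ (L i).support)
    (hnot : ¬ Acceptable sv tv L C (zOf k c) (insert ra B)) :
    ∃ b, b ≠ a ∧ zOf k c ≤ wiggle (L i) (B ∩ C a) (Bᶜ ∩ C b) := by
  -- basic facts about ra
  have hraCa : ra ∈ C a := hra.1.1.1
  have hraB : ra ∉ B := hra.1.1.2
  have hratv : ra ∉ Set.range tv := hra.2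
  have hraCb : ∀ b : Fin c, b ≠ a → ra ∉ C b := by
    intro b hba hrb
    obtain ⟨a0, -, hu⟩ := hpart.2 ra
    exact hba ((hu b hrb).trans (hu a hraCa).symm)
  -- the first three conjuncts of acceptability hold for `insert ra B`
  have h1 : ∀ j, sv j ∈ insert ra B := fun j => Set.mem_insert_of_mem _ (hacc.1 j)
  have h2 : ∀ j, tv j ∉ insert ra B := by
    intro j hj
    rcases hj with h | h
    · exact hratv ⟨j, h⟩
    · exact hacc.2.1 j h
  have h3 : ∀ a', CAcceptable sv tv L (C a') (insert ra B ∩ C a') := by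
    intro a'
    by_cases ha' : a' = a
    · subst ha'
      rw [Set.insert_inter_of_mem hraCa]
      exact hCacc
    · rw [Set.insert_inter_of_notMem (hraCb a' ha')]
      exact hacc.2.2.1 a'
  -- hence the fourth conjunct fails
  have h4 : ¬ ∀ a' b', a' ≠ b' → ∀ j,
      wiggle (L j) (insert ra B ∩ C b') ((insert ra B)ᶜ ∩ C a') ≤ zOf k c :=
    fun h => hnot ⟨h1, h2, h3, h⟩
  push_neg at h4
  obtain ⟨a', b', hab, j, hw⟩ := h4
  -- extract a maximum alternating sequence
  set m0 := wiggle (L j) (insert ra B ∩ C b') ((insert ra B)ᶜ ∩ C a') with hm0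
  obtain ⟨l, hl, hlen, halt⟩ := hasAlt_wiggle (L j) (insert ra B ∩ C b') ((insert ra B)ᶜ ∩ C a')
  have hYsub : (insert ra B)ᶜ ∩ C a' ⊆ Bᶜ ∩ C a' := by
    intro v hv
    exact ⟨fun hvB => hv.1 (Set.mem_insert_of_mem _ hvB), hv.2⟩
  -- b' must equal a
  have hb'a : b' = a := by
    by_contra hb'
    rw [Set.insert_inter_of_notMem (hraCb b' hb')] at halt
    have hm : HasAlt (L j) (B ∩ C b') (Bᶜ ∩ C a') m0 :=
      hasAlt_mono (le_refl _) hYsub ⟨l, hl, hlen, halt⟩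
    have := (le_wiggle hm).trans (hacc.2.2.2 a' b' hab j)
    omega
  rw [hb'a, Set.insert_inter_of_mem hraCa] at halt
  -- ra must occur in the alternating sequence
  have hral : ra ∈ l := by
    by_contra hrl
    have hm : HasAlt (L j) (B ∩ C a) (Bᶜ ∩ C a') m0 :=
      hasAlt_mono (le_refl _) hYsub ⟨l, hl, hlen, alternating_of_not_mem halt hrl⟩
    have := (le_wiggle hm).trans (hacc.2.2.2 a' a (hb'a ▸ hab) j)
    omega
  -- hence the sequence lives on `L i`
  have hji : j = i := by
    by_contra hji
    have hdisj := hL.1.1 j i hji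
    exact (Set.disjoint_left.mp hdisj (hl.subset hral)) hri
  subst hji
  -- remove ra and its successor from the sequence
  have hraY : ra ∉ (insert ra B)ᶜ ∩ C a' := fun h => h.1 (Set.mem_insert _ _)
  obtain ⟨l', hl', hlen', halt'⟩ :=
    alternating_remove (hl.nodup (L j).nodup) hral hraY hlen halt
  have hm : HasAlt (L j) (B ∩ C a) (Bᶜ ∩ C a') (m0 - 1) :=
    hasAlt_mono (le_refl _) hYsub ⟨l', hl'.trans hl, hlen', halt'⟩
  refine ⟨a', hb'a ▸ hab, ?_⟩
  have := le_wiggle hm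
  omega
end

section
/- Let k,c≥1, let (G,s_1,t_1,…,s_k,t_k) be a problem instance where G has a clique-partition (C_1,…,C_c), let L=(P_1,…,P_k) be a minimum linkage for it, let (v_1,…,v_n) be an enumeration of V(L)∖{s_1,…,s_k,t_1,…,t_k}, and let B_h, A_h, 𝒜_h, ℬ_h (0≤h≤n) be as defined, with s=k²+k+3. Then for every h with 0≤h≤n, A_h⊆𝒜_h⁻ and B_h⊆ℬ_h⁺. -/
open scoped Classical

section Aux

theorem shortcut_nodup_aux {V : Type} (α β γ : List V) (u v b : V)
    (hnd : (α ++ u :: (β ++ v :: γ)).Nodup) (hb : b ∈ β)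
    (hb' : b ∈ (α ++ u :: v :: γ)) : False := by
  simp only [List.nodup_append, List.nodup_cons, List.mem_append, List.mem_cons] at hnd hb'
  rcases hb' with h1 | h1 | h1 | h1 <;> grind
variable {V : Type} {G : Dgraph V} {k : ℕ}

lemma shortcut_s11 [Fintype V] (L : Fin k → Dpath G) (hL : IsMinimumLinkage L) (i : Fin k)
    (α β γ : List V) (u v : V)
    (hverts : (L i).verts = α ++ u :: (β ++ v :: γ)) (hβ : β ≠ [])
    (hadj : G.adj u v) : False := by
  classical
  have hnd : (L i).verts.Nodup := (L i).nodup
  have hch : (L i).verts.Chain' G.adj := (L i).chain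
  have hsub : List.Sublist (α ++ u :: v :: γ) (L i).verts := by
    rw [hverts]
    refine List.Sublist.append_left ?_ α
    exact List.Sublist.cons₂ u (List.sublist_append_right β (v :: γ))
  have hne : (α ++ u :: v :: γ) ≠ [] := by simp
  have hchain : (α ++ u :: v :: γ).Chain' G.adj := by
    rw [hverts] at hch
    unfold List.Chain' at hch ⊢
    rw [List.isChain_append] at hch ⊢
    obtain ⟨h1, h2, h3⟩ := hch
    refine ⟨h1, ?_, by simpa using h3⟩
    rw [List.isChain_cons_cons]
    exact ⟨hadj, h2.suffix ⟨u :: β, by simp⟩⟩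
  set P' : Dpath G := ⟨α ++ u :: v :: γ, hne, hsub.nodup hnd, hchain⟩ with hP'
  have hfirst : P'.first = (L i).first := by
    cases α with
    | nil => simp at hverts ⊢; simp [Dpath.first, hP', hverts]
    | cons a α' => simp [Dpath.first, hP', hverts]
  have hlast : P'.last = (L i).last := by
    have h1 : P'.verts = (α ++ [u]) ++ v :: γ := by simp [hP']
    have h2 : (L i).verts = (α ++ u :: β) ++ v :: γ := by simp [hverts]
    simp only [Dpath.last]
    rw [List.getLast_congr _ _ h1, List.getLast_congr _ _ h2,
      List.getLast_append, List.getLast_append]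
    · simp
    · simp
    · simp
  -- the modified linkage
  set L' : Fin k → Dpath G := Function.update L i P' with hL'
  have hsupp' : ∀ j, (L' j).support ⊆ (L j).support := by
    intro j
    by_cases hj : j = i
    · subst hj
      simp only [hL', Function.update_self]
      intro w hw
      exact hsub.mem hw
    · simp [hL', Function.update_of_ne hj]
  have hlink' : IsLinkage L' := by
    intro a b hab
    exact Set.disjoint_of_subset (hsupp' a) (hsupp' b) (hL.1 a b hab)
  have hends : ∀ j, (L' j).first = (L j).first ∧ (L' j).last = (L j).last := by
    intro j
    by_cases hj : j = i
    · subst hj; simp only [hL', Function.update_self]; exact ⟨hfirst, hlast⟩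
    · simp [hL', Function.update_of_ne hj]
  obtain ⟨b, hb⟩ := List.exists_mem_of_ne_nil β hβ
  have hbL : b ∈ linkSupport L := by
    refine Set.mem_iUnion.2 ⟨i, ?_⟩
    show b ∈ (L i).verts
    rw [hverts]; simp [hb]
  have hbnotin : b ∉ linkSupport L' := by
    intro hmem
    obtain ⟨j, hj⟩ := Set.mem_iUnion.1 hmem
    by_cases hji : j = i
    · subst hji
      have hb' : b ∈ (α ++ u :: v :: γ) := by
        simpa [hL', Function.update_self, hP', Dpath.support] using hj
      rw [hverts] at hnd
      exact shortcut_nodup_aux α β γ u v b hnd hb hb'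
    · have : b ∈ (L j).support := by simpa [hL', Function.update_of_ne hji] using hj
      have hbLi : b ∈ (L i).support := by
        show b ∈ (L i).verts
        rw [hverts]; simp [hb]
      exact (hL.1 j i hji).ne_of_mem this hbLi rfl
  have hss : linkSupport L' ⊂ linkSupport L := by
    constructor
    · intro w hw
      obtain ⟨j, hj⟩ := Set.mem_iUnion.1 hw
      exact Set.mem_iUnion.2 ⟨j, hsupp' j hj⟩
    · intro hsub2
      exact hbnotin (hsub2 hbL)
  have hlt : (linkSupport L').ncard < (linkSupport L).ncard :=
    Set.ncard_lt_ncard hss (Set.toFinite _)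
  exact absurd (hL.2 L' hlink' hends) (not_le.2 hlt)

theorem uniq_pref_aux {α : Type} {l a b a' b' q' : List α} {c : α}
    (hn : l.Nodup) (h1 : l = a ++ (c :: q') ++ b) (h2 : l = a' ++ (c :: q') ++ b')
    (hle : a.length ≤ a'.length) : a = a' := by
  have hpa : a <+: l := ⟨(c :: q') ++ b, by rw [h1]; simp⟩
  have hpa' : a' <+: l := ⟨(c :: q') ++ b', by rw [h2]; simp⟩
  obtain ⟨d, hd⟩ := List.prefix_of_prefix_length_le hpa hpa' hle
  have hcni : c ∉ a' := by
    intro hc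
    rw [h2] at hn
    rw [List.append_assoc] at hn
    exact (List.disjoint_of_nodup_append hn) hc (by simp)
  cases d with
  | nil => simpa using hd
  | cons e d' =>
    exfalso
    apply hcni
    have heq := h1.symm.trans h2
    rw [← hd] at heq
    simp only [List.append_assoc, List.cons_append, List.append_cancel_left_eq] at heq
    have hce : c = e := by
      have := congrArg (fun l => l.head?) heq
      simpa using this
    rw [← hd, hce]
    simp

theorem uniq_decomp {α : Type} {l a b a' b' q : List α}
    (hn : l.Nodup) (hq : q ≠ []) (h1 : l = a ++ q ++ b) (h2 : l = a' ++ q ++ b') :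
    a = a' ∧ b = b' := by
  obtain ⟨c, q', rfl⟩ := List.exists_cons_of_ne_nil hq
  have haa : a = a' := by
    rcases le_total a.length a'.length with hle | hle
    · exact uniq_pref_aux hn h1 h2 hle
    · exact (uniq_pref_aux hn h2 h1 hle).symm
  subst haa
  refine ⟨rfl, ?_⟩
  have := h1.symm.trans h2
  simpa using this

/-- Existence of a maximal segment through `v` in `S`. -/
theorem exists_seg {V : Type} {G : Dgraph V} {k : ℕ} (L : Fin k → Dpath G)
    (S : Set V) (i : Fin k) (v : V) (hv : v ∈ (L i).verts) (hvS : v ∈ S) :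
    ∃ Q : Dpath G, Q ∈ segsIn L S ∧ v ∈ Q.verts ∧
      ∃ x y, (L i).verts = x ++ Q.verts ++ y := by
  classical
  set l := (L i).verts with hl
  have hnd : l.Nodup := (L i).nodup
  obtain ⟨l₁, l₂, hsplit⟩ := List.append_of_mem hv
  set p : V → Bool := fun x => decide (x ∈ S) with hp
  set aseg : List V := (l₁.reverse.takeWhile p).reverse with haseg
  set bseg : List V := l₂.takeWhile p with hbseg
  set q : List V := aseg ++ v :: bseg with hqdef
  set pre : List V := (l₁.reverse.dropWhile p).reverse with hpre
  set suf : List V := l₂.dropWhile p with hsuf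
  have hl₁ : l₁ = pre ++ aseg := by
    rw [hpre, haseg, ← List.reverse_append, List.takeWhile_append_dropWhile,
      List.reverse_reverse]
  have hl₂ : l₂ = bseg ++ suf := by
    rw [hbseg, hsuf, List.takeWhile_append_dropWhile]
  have hldecomp : l = pre ++ q ++ suf := by
    rw [hsplit, hl₁, hl₂, hqdef]; simp
  have hqinf : q <:+: l := ⟨pre, suf, hldecomp.symm⟩
  have hvq : v ∈ q := by simp [hqdef]
  have hqS : ∀ x ∈ q, x ∈ S := by
    intro x hx
    rcases List.mem_append.1 hx with hx | hx
    · have : p x = true := List.mem_takeWhile_imp (by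
        rw [haseg] at hx; exact List.mem_reverse.1 hx)
      simpa [hp] using this
    · rcases List.mem_cons.1 hx with rfl | hx
      · exact hvS
      · have : p x = true := List.mem_takeWhile_imp hx
        simpa [hp] using this
  have hprelast : ∀ z, pre.getLast? = some z → ¬ (z ∈ S) := by
    intro z hz
    have : (l₁.reverse.dropWhile p).head? = some z := by
      rw [hpre, List.getLast?_reverse] at hz
      exact hz
    have h2 := List.head?_dropWhile_not p l₁.reverse
    rw [this] at h2
    simpa [hp] using h2
  have hsufhead : ∀ z, suf.head? = some z → ¬ (z ∈ S) := by
    intro z hz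
    have h2 := List.head?_dropWhile_not p l₂
    rw [hsuf] at hz
    rw [hz] at h2
    simpa [hp] using h2
  have hqne : q ≠ [] := by simp [hqdef]
  refine ⟨⟨q, hqne, hnd.sublist hqinf.sublist, (L i).chain.infix hqinf⟩,
    ⟨i, hqinf, hqS, ?_⟩, hvq, pre, suf, hldecomp⟩
  intro Q' hQ'sub hQ'S hqQ'
  obtain ⟨u, w, hq'⟩ := hqQ'
  obtain ⟨x, y, hxy⟩ := hQ'sub
  have hldecomp2 : l = (x ++ u) ++ q ++ (w ++ y) := by
    rw [hl, ← hxy, ← hq']; simp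
  obtain ⟨he1, he2⟩ := uniq_decomp hnd hqne hldecomp2 hldecomp
  have hu : u = [] := by
    rcases u.eq_nil_or_concat with rfl | ⟨u₀, z, rfl⟩
    · rfl
    exfalso
    have hzS : z ∈ S := hQ'S (show z ∈ Q'.verts by rw [← hq']; simp)
    apply hprelast z _ hzS
    rw [← he1]
    simp
  have hw : w = [] := by
    cases w with
    | nil => rfl
    | cons z w' =>
      exfalso
      have hzS : z ∈ S := hQ'S (show z ∈ Q'.verts by rw [← hq']; simp)
      apply hsufhead z _ hzS
      rw [← he2]
      simp
  rw [← hq', hu, hw]; simp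

end Aux

/-- Step (2) of the proof of Theorem 4.2: `A h ⊆ 𝒜 h⁻` and `B h ⊆ ℬ h⁺`. -/
theorem subset_plus_minus {V : Type} [Fintype V] {k c : ℕ} (hk : 1 ≤ k) (hc : 1 ≤ c)
    (G : Dgraph V) (sv tv : Fin k → V) (hinst : IsInstance sv tv)
    (C : Fin c → Set V) (hpart : G.IsCliquePartition C)
    (L : Fin k → Dpath G) (hL : IsMinimumLinkageFor L sv tv)
    (e : List V) (henum : IsEnumeration L sv tv e) :
    ∀ h ≤ e.length,
      AsetOf L sv e h ⊆ minusSet G C (k ^ 2 + k + 3) (AseqsOf G C (k ^ 2 + k + 3) L sv e h) ∧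
      BsetOf sv e h ⊆ plusSet G C (k ^ 2 + k + 3) (BseqsOf G C (k ^ 2 + k + 3) L sv e h) := by
  classical
  intro h _
  set s := k ^ 2 + k + 3 with hs
  have hs3 : 3 ≤ s := hs ▸ le_add_self
  constructor
  · -- A-side
    intro v hv
    obtain ⟨hvL, hvB⟩ := hv
    obtain ⟨i, hvi⟩ := Set.mem_iUnion.1 hvL
    have hvi : v ∈ (L i).verts := hvi
    obtain ⟨Q, hQseg, hvQ, x, y, hxy⟩ := exists_seg L (AsetOf L sv e h) i v hvi ⟨hvL, hvB⟩
    obtain ⟨a, hva, -⟩ := hpart.2 v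
    set p : V → Bool := fun w => decide (w ∈ C a) with hp
    have hfirstEq : firstUpTo Q (C a) s = (Q.verts.filter p).take s := rfl
    refine ⟨firstUpTo Q (C a) s, ⟨Q, hQseg, a, rfl⟩, a, ?_, ?_⟩
    · intro w hw
      rcases Set.mem_insert_iff.1 hw with rfl | hw
      · exact hva
      · have hw' : w ∈ Q.verts.filter p := List.mem_of_mem_take (hfirstEq ▸ hw)
        simpa [hp] using (List.mem_filter.1 hw').2
    · have hvf : v ∈ Q.verts.filter p := List.mem_filter.2 ⟨hvQ, by simp [hp, hva]⟩
      by_cases hvX : v ∈ firstUpTo Q (C a) s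
      · exact Or.inl hvX
      right
      obtain ⟨l₁, l₂, hsplit⟩ := List.append_of_mem hvQ
      have hQnd : (l₁ ++ v :: l₂).Nodup := hsplit ▸ Q.nodup
      have hfsplit : Q.verts.filter p = l₁.filter p ++ v :: l₂.filter p := by
        rw [hsplit, List.filter_append, List.filter_cons_of_pos (by simp [hp, hva])]
      have hlen : s ≤ (l₁.filter p).length := by
        by_contra hlt
        push_neg at hlt
        apply hvX
        rw [hfirstEq, hfsplit, List.take_append]
        refine List.mem_append.2 (Or.inr ?_)
        obtain ⟨m, hm⟩ := Nat.exists_eq_succ_of_ne_zero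
          (show s - (l₁.filter p).length ≠ 0 by omega)
        rw [hm]
        simp
      have hXeq : firstUpTo Q (C a) s = (l₁.filter p).take s := by
        rw [hfirstEq, hfsplit, List.take_append_of_le_length hlen]
      refine ⟨hvX, ?_, ?_⟩
      · rw [hXeq, List.length_take]
        exact min_eq_left hlen
      · intro u hu
        rw [hXeq, List.take_take, min_eq_left (by omega : s - 1 ≤ s)] at hu
        have huf : u ∈ l₁.filter p := List.mem_of_mem_take hu
        have hul₁ : u ∈ l₁ := (List.mem_filter.1 huf).1
        have huC : u ∈ C a := by simpa [hp] using (List.mem_filter.1 huf).2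
        have hvnl₁ : v ∉ l₁ := fun hmem =>
          (List.disjoint_of_nodup_append hQnd) hmem List.mem_cons_self
        have huv : u ≠ v := fun h' => hvnl₁ (h' ▸ hul₁)
        rcases hpart.1 a u huC v hva huv with hadj | hadj
        · exfalso
          obtain ⟨α, β, hαβ⟩ := List.append_of_mem hul₁
          have hl₁nd : (α ++ u :: β).Nodup := hαβ ▸ hQnd.of_append_left
          have hfl₁ : l₁.filter p = α.filter p ++ u :: β.filter p := by
            rw [hαβ, List.filter_append, List.filter_cons_of_pos (by simp [hp, huC])]
          have hunα : u ∉ α.filter p := fun hmem =>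
            (List.disjoint_of_nodup_append hl₁nd) ((List.mem_filter.1 hmem).1)
              List.mem_cons_self
          have hlenα : (α.filter p).length < s - 1 := by
            by_contra hge
            push_neg at hge
            rw [hfl₁, List.take_append_of_le_length hge] at hu
            exact hunα (List.mem_of_mem_take hu)
          have hβf : β.filter p ≠ [] := by
            intro hnil
            have hlc := congrArg List.length hfl₁
            rw [hnil] at hlc
            simp only [List.length_append, List.length_cons, List.length_nil] at hlc
            omega
          have hβ : β ≠ [] := fun hn => hβf (by rw [hn]; rfl)
          refine shortcut_s11 L hL.2 i (x ++ α) β (l₂ ++ y) u v ?_ hβ hadj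
          rw [hxy, hsplit, hαβ]
          simp
        · exact hadj
  · -- B-side
    intro v hv
    have hvL : v ∈ linkSupport L := by
      rcases hv with ⟨i, rfl⟩ | hv2
      · refine Set.mem_iUnion.2 ⟨i, ?_⟩
        show sv i ∈ (L i).verts
        rw [← (hL.1.2 i).1]
        exact List.head_mem (L i).ne
      · have hve : v ∈ e := List.mem_of_mem_take hv2
        have hmem : v ∈ ({w | w ∈ e} : Set V) := hve
        rw [henum.2] at hmem
        exact hmem.1
    obtain ⟨i, hvi⟩ := Set.mem_iUnion.1 hvL
    have hvi : v ∈ (L i).verts := hvi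
    obtain ⟨Q, hQseg, hvQ, x, y, hxy⟩ := exists_seg L (BsetOf sv e h) i v hvi hv
    obtain ⟨a, hva, -⟩ := hpart.2 v
    set p : V → Bool := fun w => decide (w ∈ C a) with hp
    set f := Q.verts.filter p with hf
    have hlastEq : lastIn Q (C a) s = f.drop (f.length - s) := rfl
    refine ⟨lastIn Q (C a) s, ⟨Q, hQseg, a, rfl⟩, a, ?_, ?_⟩
    · intro w hw
      rcases Set.mem_insert_iff.1 hw with rfl | hw
      · exact hva
      · have hw' : w ∈ f := (List.drop_sublist _ _).mem (hlastEq ▸ hw)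
        simpa [hp] using (List.mem_filter.1 hw').2
    · have hvf : v ∈ f := List.mem_filter.2 ⟨hvQ, by simp [hp, hva]⟩
      by_cases hvX : v ∈ lastIn Q (C a) s
      · exact Or.inl hvX
      right
      obtain ⟨l₁, l₂, hsplit⟩ := List.append_of_mem hvQ
      have hQnd : (l₁ ++ v :: l₂).Nodup := hsplit ▸ Q.nodup
      have hfsplit : f = l₁.filter p ++ v :: l₂.filter p := by
        rw [hf, hsplit, List.filter_append, List.filter_cons_of_pos (by simp [hp, hva])]
      have hflen : f.length = (l₁.filter p).length + 1 + (l₂.filter p).length := by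
        rw [hfsplit]; simp; omega
      have hlen : s ≤ (l₂.filter p).length := by
        by_contra hlt
        push_neg at hlt
        apply hvX
        rw [hlastEq, hfsplit, List.drop_append_of_le_length (by simp only [List.length_append, List.length_cons]; omega)]
        simp
      have hXeq : lastIn Q (C a) s = (l₂.filter p).drop ((l₂.filter p).length - s) := by
        rw [hlastEq]
        have h1 : f = (l₁.filter p ++ [v]) ++ l₂.filter p := by rw [hfsplit]; simp
        have h2 : f.length - s = (l₁.filter p ++ [v]).length + ((l₂.filter p).length - s) := by
          simp only [List.length_append, List.length_cons, List.length_nil]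
          omega
        rw [h2, h1, ← List.drop_drop, List.drop_left]
      have hXlen : (lastIn Q (C a) s).length = s := by
        rw [hXeq, List.length_drop]
        omega
      refine ⟨hvX, hXlen, ?_⟩
      · intro u hu
        rw [hXlen] at hu
        have hone : s - (s - 1) = 1 := by omega
        rw [hone, hXeq, List.drop_drop] at hu
        have huf : u ∈ l₂.filter p := (List.drop_sublist _ _).mem hu
        have hul₂ : u ∈ l₂ := (List.mem_filter.1 huf).1
        have huC : u ∈ C a := by simpa [hp] using (List.mem_filter.1 huf).2
        have hvnl₂ : v ∉ l₂ := by
          have := hQnd.of_append_right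
          rw [List.nodup_cons] at this
          exact this.1
        have hvu : v ≠ u := fun h' => hvnl₂ (h' ▸ hul₂)
        rcases hpart.1 a v hva u huC hvu with hadj | hadj
        · exfalso
          obtain ⟨α, γ, hαγ⟩ := List.append_of_mem hul₂
          have hl₂nd : (α ++ u :: γ).Nodup := by
            have := hQnd.of_append_right
            rw [List.nodup_cons] at this
            exact hαγ ▸ this.2
          have hfl₂ : l₂.filter p = α.filter p ++ u :: γ.filter p := by
            rw [hαγ, List.filter_append, List.filter_cons_of_pos (by simp [hp, huC])]
          have hunγ : u ∉ γ.filter p := by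
            intro hmem
            have hnd2 := hfl₂ ▸ (hQnd.of_append_right.of_cons.filter p)
            have := hnd2.of_append_right
            rw [List.nodup_cons] at this
            exact this.1 hmem
          have hαf : α.filter p ≠ [] := by
            intro hnil
            set m := (l₂.filter p).length - s with hm
            rw [hfl₂, hnil, List.nil_append] at hu
            have : u ∈ γ.filter p := by
              obtain ⟨j, hj⟩ := Nat.exists_eq_succ_of_ne_zero (show m + 1 ≠ 0 by omega)
              rw [hj, List.drop_succ_cons] at hu
              exact (List.drop_sublist _ _).mem hu
            exact hunγ this
          have hα : α ≠ [] := fun hn => hαf (by rw [hn]; rfl)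
          refine shortcut_s11 L hL.2 i (x ++ l₁) α (γ ++ y) v u ?_ hα hadj
          rw [hxy, hsplit, hαγ]
          simp
        · exact hadj
end

section
/- Let k,c≥1, let (G,s_1,t_1,…,s_k,t_k) be a problem instance where G has a clique-partition (C_1,…,C_c), and let H be the auxiliary digraph as defined. Let (Y_1,D_1),…,(Y_n,D_n) be the vertices, in order, of a directed path in H, and let Y=Y_1∪…∪Y_n. If (e,i)∈Y, 1≤h≤n, and exactly one end of e belongs to D_h, then (e,i)∈Y_h. -/
open scoped Classical

section AuxLemmas

private lemma xor_mono' {V : Type} {D1 D2 D3 : Set V} {a b : V}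
    (h12 : D1 ⊆ D2) (h23 : D2 ⊆ D3)
    (h1 : Xor' (a ∈ D1) (b ∈ D1)) (h3 : Xor' (a ∈ D3) (b ∈ D3)) :
    Xor' (a ∈ D2) (b ∈ D2) := by
  have ha := @h12 a; have hb := @h12 b
  have ha' := @h23 a; have hb' := @h23 b
  unfold Xor' Xor at *
  tauto

private lemma step_fwd' {V : Type} {k c : ℕ} {G : Dgraph V} {sv tv : Fin k → V}
    {C : Fin c → Set V} {w r s t : ℕ} {x y : Set ((V × V) × Fin k) × Set V}
    (hxy : HAdj G sv tv C w r s t x y) {p : (V × V) × Fin k}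
    (hp : p ∈ x.1) (hy : Xor' (p.1.1 ∈ y.2) (p.1.2 ∈ y.2)) : p ∈ y.1 := by
  obtain ⟨-, hx, -, hsub, a, b, -, hsd, hmid, -, hm⟩ := hxy
  by_contra hpy
  have hmem : p ∈ symmDiff x.1 y.1 := Set.mem_symmDiff.2 (Or.inl ⟨hp, hpy⟩)
  rw [hsd] at hmem
  have hxor := hx.2.2 p hp
  rcases hmem with rfl | rfl
  · -- p = a : head of p is the middle vertex, in y.2 \ x.2
    have htail : p.1.1 ∈ x.2 := by
      rcases hxor with ⟨h1, _⟩ | ⟨h1, _⟩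
      · exact h1
      · exact absurd h1 hm.2
    rcases hy with ⟨_, h2⟩ | ⟨_, h2⟩
    · exact h2 hm.1
    · exact h2 (hsub htail)
  · -- p = b : tail of p is the middle vertex, in y.2 \ x.2
    have hm' : p.1.1 ∈ y.2 \ x.2 := hmid ▸ hm
    have hhead : p.1.2 ∈ x.2 := by
      rcases hxor with ⟨h1, _⟩ | ⟨h1, _⟩
      · exact absurd h1 hm'.2
      · exact h1
    rcases hy with ⟨_, h2⟩ | ⟨_, h2⟩
    · exact h2 (hsub hhead)
    · exact h2 hm'.1

private lemma step_bwd' {V : Type} {k c : ℕ} {G : Dgraph V} {sv tv : Fin k → V}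
    {C : Fin c → Set V} {w r s t : ℕ} {x y : Set ((V × V) × Fin k) × Set V}
    (hxy : HAdj G sv tv C w r s t x y) {p : (V × V) × Fin k}
    (hp : p ∈ y.1) (hx : Xor' (p.1.1 ∈ x.2) (p.1.2 ∈ x.2)) : p ∈ x.1 := by
  obtain ⟨-, -, hy, hsub, a, b, -, hsd, hmid, -, hm⟩ := hxy
  by_contra hpx
  have hmem : p ∈ symmDiff x.1 y.1 := Set.mem_symmDiff.2 (Or.inr ⟨hp, hpx⟩)
  rw [hsd] at hmem
  have hxor := hy.2.2 p hp
  rcases hmem with rfl | rfl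
  · -- p = a : head of p is the middle vertex, in y.2 \ x.2
    have htail : p.1.1 ∉ y.2 := by
      rcases hxor with ⟨_, h2⟩ | ⟨_, h2⟩
      · exact absurd hm.1 h2
      · exact h2
    rcases hx with ⟨h1, _⟩ | ⟨h1, _⟩
    · exact htail (hsub h1)
    · exact hm.2 h1
  · -- p = b : tail of p is the middle vertex, in y.2 \ x.2
    have hm' : p.1.1 ∈ y.2 \ x.2 := hmid ▸ hm
    have hhead : p.1.2 ∉ y.2 := by
      rcases hxor with ⟨_, h2⟩ | ⟨_, h2⟩
      · exact h2
      · exact absurd hm'.1 h2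
    rcases hx with ⟨h1, _⟩ | ⟨h1, _⟩
    · exact hm'.2 h1
    · exact hhead (hsub h1)

end AuxLemmas

/-- Step (2) of the proof of Theorem 5.1: if `(e,i) ∈ Y = Y 1 ∪ ⋯ ∪ Y n` and exactly one
end of `e` lies in `D h`, then `(e,i) ∈ Y h`. -/
theorem aux_path_edge_membership {V : Type} [Fintype V] {k c : ℕ} (hk : 1 ≤ k)
    (hc : 1 ≤ c) (G : Dgraph V) (sv tv : Fin k → V) (hinst : IsInstance sv tv)
    (C : Fin c → Set V) (hpart : G.IsCliquePartition C)
    (P : Dpath (auxH G sv tv C (wOf k c) (rOf k c) (sOf k) (tOf k c)))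
    (hHV : ∀ x ∈ P.support, HVert G sv tv C (wOf k c) (rOf k c) (sOf k) (tOf k c) x) :
    ∀ p ∈ ⋃ x ∈ P.support, x.1, ∀ x ∈ P.support,
      Xor' (p.1.1 ∈ x.2) (p.1.2 ∈ x.2) → p ∈ x.1 := by
  intro p hp x hx hxor
  set l := P.verts with hl
  -- consecutive vertices of the path are adjacent in H
  have hstep : ∀ i (h : i < l.length - 1),
      HAdj G sv tv C (wOf k c) (rOf k c) (sOf k) (tOf k c)
        (l.get ⟨i, by omega⟩) (l.get ⟨i + 1, by omega⟩) :=
    fun i h => List.isChain_iff_getElem.1 P.chain i (by rw [← hl]; omega)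
  have hmemL : ∀ i (h : i < l.length), l.get ⟨i, h⟩ ∈ P.support := by
    intro i h
    exact List.get_mem l ⟨i, h⟩
  -- D's are nested along the path
  have hmono : ∀ d i (h : i + d < l.length),
      (l.get ⟨i, by omega⟩).2 ⊆ (l.get ⟨i + d, h⟩).2 := by
    intro d
    induction d with
    | zero => intro i h; exact subset_rfl
    | succ d ih =>
      intro i h
      have h1 : i + d < l.length - 1 := by omega
      have hsub := (hstep (i + d) h1).2.2.2.1
      exact (ih i (by omega)).trans hsub
  -- forward propagation
  have hfwd : ∀ d i (h : i + d < l.length), p ∈ (l.get ⟨i, by omega⟩).1 →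
      Xor' (p.1.1 ∈ (l.get ⟨i + d, h⟩).2) (p.1.2 ∈ (l.get ⟨i + d, h⟩).2) →
      p ∈ (l.get ⟨i + d, h⟩).1 := by
    intro d
    induction d with
    | zero => intro i h hpi _; exact hpi
    | succ d ih =>
      intro i h hpi hXend
      have hlt : i + d < l.length := by omega
      have hXi : Xor' (p.1.1 ∈ (l.get ⟨i, by omega⟩).2)
          (p.1.2 ∈ (l.get ⟨i, by omega⟩).2) :=
        (hHV _ (hmemL i (by omega))).2.2 p hpi
      have hXmid : Xor' (p.1.1 ∈ (l.get ⟨i + d, hlt⟩).2)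
          (p.1.2 ∈ (l.get ⟨i + d, hlt⟩).2) :=
        xor_mono' (hmono d i hlt) ((hstep (i + d) (by omega)).2.2.2.1) hXi hXend
      have hpmid : p ∈ (l.get ⟨i + d, hlt⟩).1 := ih i hlt hpi hXmid
      exact step_fwd' (hstep (i + d) (by omega)) hpmid hXend
  have hmono' : ∀ i j (hij : i ≤ j) (h : j < l.length),
      (l.get ⟨i, by omega⟩).2 ⊆ (l.get ⟨j, h⟩).2 := by
    intro i j hij h
    obtain ⟨d, rfl⟩ := Nat.exists_eq_add_of_le hij
    exact hmono d i h
  -- backward propagation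
  have hbwd : ∀ d i j, i + d = j → ∀ (h : j < l.length) (hi : i < l.length),
      p ∈ (l.get ⟨j, h⟩).1 →
      Xor' (p.1.1 ∈ (l.get ⟨i, hi⟩).2) (p.1.2 ∈ (l.get ⟨i, hi⟩).2) →
      p ∈ (l.get ⟨i, hi⟩).1 := by
    intro d
    induction d with
    | zero =>
      intro i j hij h hi hpi _
      subst hij
      exact hpi
    | succ d ih =>
      intro i j hij h hi hpj hXi
      have hXend : Xor' (p.1.1 ∈ (l.get ⟨j, h⟩).2) (p.1.2 ∈ (l.get ⟨j, h⟩).2) :=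
        (hHV _ (hmemL _ h)).2.2 p hpj
      have hstepi := hstep i (by omega)
      have hX1 : Xor' (p.1.1 ∈ (l.get ⟨i + 1, by omega⟩).2)
          (p.1.2 ∈ (l.get ⟨i + 1, by omega⟩).2) :=
        xor_mono' hstepi.2.2.2.1 (hmono' (i + 1) j (by omega) h) hXi hXend
      have hp1 : p ∈ (l.get ⟨i + 1, by omega⟩).1 :=
        ih (i + 1) j (by omega) h (by omega) hpj hX1
      exact step_bwd' hstepi hp1 hXi
  -- put things together
  obtain ⟨y, hy, hpy⟩ := Set.mem_iUnion₂.1 hp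
  obtain ⟨⟨g, hgl⟩, rfl⟩ := List.mem_iff_get.1 hy
  obtain ⟨⟨j, hjl⟩, rfl⟩ := List.mem_iff_get.1 hx
  rcases le_or_gt g j with hgj | hjg
  · obtain ⟨d, rfl⟩ := Nat.exists_eq_add_of_le hgj
    exact hfwd d g hjl hpy hxor
  · exact hbwd (g - j) j g (by omega) hgl hjl hpy hxor
end
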